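/- arXiv:2405.07947 — 7 statements merged into one kernel-verified Lean document; each statement's English description precedes it below -/
import Mathlib

section
/- On the complete graph K_n, if an effective divisor D has rank zero, then for all i with 1 ≤ i ≤ n−1, the number of vertices v with D(v) ≥ i is strictly less than n−i. -/
open Finset

open scoped Classical

/-- A divisor is effective if it is nonnegative everywhere. -/
def Effective {V : Type*} (D : V → ℤ) : Prop := ∀ v, 0 ≤ D v

/-- The degree of a divisor: the total number of chips. -/
def degD {V : Type*} [Fintype V] (D : V → ℤ) : ℤ := ∑ v, D v

/-- The effect on a vertex `w` of firing each vertex `u` with multiplicity `f u`. -/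
noncomputable def lap {V : Type*} [Fintype V] (G : SimpleGraph V) (f : V → ℤ) (w : V) : ℤ :=
  (∑ u, f u * (if G.Adj u w then 1 else 0)) - f w * (∑ u, if G.Adj u w then (1 : ℤ) else 0)

/-- Two divisors are (chip-firing) equivalent if one is obtained from the other by a
sequence of chip-firing moves, i.e. they differ by a Laplacian of some `f : V → ℤ`. -/
def LinEquiv {V : Type*} [Fintype V] (G : SimpleGraph V) (D D' : V → ℤ) : Prop :=
  ∃ f : V → ℤ, ∀ w, D' w = D w + lap G f w

/-- A divisor has positive rank if for every vertex there is an equivalent effective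
divisor with a chip at that vertex. -/
def PositiveRank {V : Type*} [Fintype V] (G : SimpleGraph V) (D : V → ℤ) : Prop :=
  ∀ v, ∃ D', LinEquiv G D D' ∧ Effective D' ∧ 0 < D' v

/-- A Ferrers diagram: a finite subset of ℕ² with coordinates ≥ 1, closed under
decreasing either coordinate toward 1. -/
def IsFerrers (F : Finset (ℕ × ℕ)) : Prop :=
  ∀ p ∈ F, 1 ≤ p.1 ∧ 1 ≤ p.2 ∧ (p.1 = 1 ∨ (p.1 - 1, p.2) ∈ F) ∧ (p.2 = 1 ∨ (p.1, p.2 - 1) ∈ F)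

/-- The Ferrers rook graph: vertices are points of `F`, two distinct points adjacent
iff they share a row or a column. -/
def rookGraph (F : Finset (ℕ × ℕ)) : SimpleGraph {p // p ∈ F} where
  Adj a b := a ≠ b ∧ ((a : ℕ × ℕ).1 = (b : ℕ × ℕ).1 ∨ (a : ℕ × ℕ).2 = (b : ℕ × ℕ).2)
  symm := ⟨fun a b h => ⟨h.1.symm, h.2.imp Eq.symm Eq.symm⟩⟩
  loopless := ⟨fun a h => h.1 rfl⟩

/-- The set of degrees of positive-rank divisors on `R(F)`; its least element is the gonality. -/
def gonSet (F : Finset (ℕ × ℕ)) : Set ℤ :=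
  {d | ∃ D : {p // p ∈ F} → ℤ, PositiveRank (rookGraph F) D ∧ degD D = d}

/-- The divisor `D_{x,y}`: one chip on each vertex not in column `x` and not in row `y`. -/
def Dxy (F : Finset (ℕ × ℕ)) (x y : ℕ) : {p // p ∈ F} → ℤ :=
  fun p => if (p : ℕ × ℕ).1 ≠ x ∧ (p : ℕ × ℕ).2 ≠ y then 1 else 0

lemma lap_top_indicator {n : ℕ} (S : Finset (Fin n)) (w : Fin n) :
    lap (⊤ : SimpleGraph (Fin n)) (fun u => if u ∈ S then 1 else 0) w =
      (S.card : ℤ) - (if w ∈ S then (n : ℤ) else 0) := by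
  unfold lap
  simp only [SimpleGraph.top_adj]
  have h1 : (∑ u, (if u ∈ S then (1:ℤ) else 0) * (if u ≠ w then 1 else 0))
      = ((S.erase w).card : ℤ) := by
    rw [show (∑ u, (if u ∈ S then (1:ℤ) else 0) * (if u ≠ w then 1 else 0))
        = ∑ u, (if u ∈ S.erase w then (1:ℤ) else 0) from
      Finset.sum_congr rfl fun u _ => by
        by_cases h1 : u ∈ S <;> by_cases h2 : u = w <;>
          simp [h1, h2, Finset.mem_erase]]
    rw [Finset.sum_ite_mem, Finset.univ_inter, Finset.sum_const, nsmul_eq_mul, mul_one]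
  have h2 : (∑ u : Fin n, if u ≠ w then (1:ℤ) else 0) = (n : ℤ) - 1 := by
    have : (∑ u : Fin n, if u ≠ w then (1:ℤ) else 0)
        = ∑ u : Fin n, (1 - if u = w then (1:ℤ) else 0) := by
      refine Finset.sum_congr rfl fun u _ => ?_
      by_cases hu : u = w <;> simp [hu]
    rw [this, Finset.sum_sub_distrib]
    simp [Finset.sum_ite_eq']
  rw [h1, h2]
  by_cases hw : w ∈ S
  · rw [Finset.card_erase_of_mem hw]
    have hpos : 1 ≤ S.card := Finset.card_pos.mpr ⟨w, hw⟩
    simp only [hw, if_true]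
    push_cast [Nat.cast_sub hpos]
    ring
  · rw [Finset.erase_eq_of_notMem hw]
    simp [hw]

theorem stmt1 (n : ℕ) (D : Fin n → ℤ) (hD : Effective D)
    (h : ¬ PositiveRank (⊤ : SimpleGraph (Fin n)) D) :
    ∀ i : ℕ, 1 ≤ i → i ≤ n - 1 →
      (Finset.univ.filter (fun v => (i : ℤ) ≤ D v)).card < n - i := by
  intro i hi1 hin
  by_contra hcon
  push_neg at hcon
  apply h
  set S := Finset.univ.filter (fun v => (i : ℤ) ≤ D v) with hS
  -- basic numeric facts
  have hn2 : 2 ≤ n := by omega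
  have hiltn : i < n := by omega
  have hcard : (n : ℤ) - i ≤ (S.card : ℤ) := by
    have := hcon
    push_cast [Nat.cast_sub hiltn.le] at this ⊢
    omega
  intro v
  by_cases hv : v ∈ S
  · refine ⟨D, ⟨0, fun w => ?_⟩, hD, ?_⟩
    · simp [lap]
    · have : (i : ℤ) ≤ D v := (Finset.mem_filter.mp hv).2
      have : (1 : ℤ) ≤ i := by exact_mod_cast hi1
      omega
  · refine ⟨fun w => D w + lap (⊤ : SimpleGraph (Fin n))
      (fun u => if u ∈ S then 1 else 0) w, ⟨_, fun w => rfl⟩, ?_, ?_⟩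
    · intro w
      simp only [lap_top_indicator]
      by_cases hw : w ∈ S
      · have hDw : (i : ℤ) ≤ D w := (Finset.mem_filter.mp hw).2
        simp only [hw, if_true]
        omega
      · have := hD w
        simp only [hw, if_false]
        omega
    · simp only [lap_top_indicator]
      have := hD v
      simp only [hv, if_false]
      have : (1 : ℤ) ≤ i := by exact_mod_cast hi1
      have hni : (i : ℤ) < n := by exact_mod_cast hiltn
      omega
end

section
/- Let F be a Ferrers diagram and (x,y) ∈ ℕ² with x > 1, y > 1, and (x,y) ∉ F. Then the divisor D_{x,y} on the Ferrers rook graph R(F), defined as the sum of all vertices (x',y') ∈ F with x' ≠ x and y' ≠ y, has positive rank. -/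
open Finset

open scoped Classical

lemma ferrers_left {F : Finset (ℕ × ℕ)} (hF : IsFerrers F) :
    ∀ a b : ℕ, (a, b) ∈ F → (1, b) ∈ F := by
  intro a
  induction a with
  | zero => intro b hb; exact absurd (hF _ hb).1 (by norm_num)
  | succ n ih =>
    intro b hb
    rcases (hF _ hb).2.2.1 with h | h
    · rwa [← h]
    · exact ih b (by simpa using h)

lemma col_case (F : Finset (ℕ × ℕ)) (hF : IsFerrers F) (x y : ℕ)
    (hx : 1 < x) (hxy : (x, y) ∉ F) (v : {p // p ∈ F}) (hv : (v : ℕ × ℕ).1 = x) :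
    ∃ D', LinEquiv (rookGraph F) (Dxy F x y) D' ∧ Effective D' ∧ 0 < D' v := by
  set G := rookGraph F with hG
  set f : {p // p ∈ F} → ℤ := fun u => if (u : ℕ × ℕ).1 ≠ x then 1 else 0 with hf
  have gain : ∀ w : {p // p ∈ F}, (w : ℕ × ℕ).1 = x →
      1 ≤ Dxy F x y w + lap G f w := by
    intro w hw
    have hfw : f w = 0 := by simp [hf, hw]
    have hD : Dxy F x y w = 0 := by simp [Dxy, hw]
    have hterm : ∀ u : {p // p ∈ F},
        f u * (if G.Adj u w then (1:ℤ) else 0)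
          = if ((u : ℕ × ℕ).1 ≠ x ∧ G.Adj u w) then 1 else 0 := by
      intro u
      by_cases h1 : (u : ℕ × ℕ).1 ≠ x <;> by_cases h2 : G.Adj u w <;>
        simp [hf, h1, h2]
    have hu0F : (1, (w : ℕ × ℕ).2) ∈ F := ferrers_left hF _ _ w.property
    set u0 : {p // p ∈ F} := ⟨(1, (w : ℕ × ℕ).2), hu0F⟩ with hu0
    have hne : u0 ≠ w := by
      intro h
      have h1 : (u0 : ℕ × ℕ).1 = (w : ℕ × ℕ).1 := by rw [h]
      rw [hw] at h1
      have h2 : (1 : ℕ) = x := h1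
      omega
    have hP : ((u0 : ℕ × ℕ).1 ≠ x ∧ G.Adj u0 w) := by
      refine ⟨(by omega : (1:ℕ) ≠ x), hne, Or.inr rfl⟩
    have h1 : (1:ℤ) ≤ ∑ u : {p // p ∈ F}, f u * (if G.Adj u w then (1:ℤ) else 0) := by
      rw [Finset.sum_congr rfl fun u _ => hterm u]
      have := Finset.single_le_sum
        (f := fun u : {p // p ∈ F} => if ((u : ℕ × ℕ).1 ≠ x ∧ G.Adj u w) then (1:ℤ) else 0)
        (fun u _ => by positivity) (Finset.mem_univ u0)
      simpa [hP] using this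
    have hl : 1 ≤ lap G f w := by rw [lap, hfw]; simpa using h1
    omega
  have eff : ∀ w : {p // p ∈ F}, 0 ≤ Dxy F x y w + lap G f w := by
    intro w
    by_cases hw : (w : ℕ × ℕ).1 = x
    · exact le_trans zero_le_one (gain w hw)
    · have hfw : f w = 1 := by simp [hf, hw]
      have hsplit : ∀ u : {p // p ∈ F},
          f u * (if G.Adj u w then (1:ℤ) else 0)
            = (if G.Adj u w then (1:ℤ) else 0)
              - (if ((u : ℕ × ℕ).1 = x ∧ G.Adj u w) then 1 else 0) := by
        intro u
        by_cases h1 : (u : ℕ × ℕ).1 = x <;> by_cases h2 : G.Adj u w <;>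
          simp [hf, h1, h2]
      have hlap : lap G f w
          = - ∑ u : {p // p ∈ F}, (if ((u : ℕ × ℕ).1 = x ∧ G.Adj u w) then (1:ℤ) else 0) := by
        rw [lap, hfw, Finset.sum_congr rfl fun u _ => hsplit u, Finset.sum_sub_distrib]
        ring
      have hval : ∀ u : {p // p ∈ F}, ((u : ℕ × ℕ).1 = x ∧ G.Adj u w) →
          (u : ℕ × ℕ) = (x, (w : ℕ × ℕ).2) := by
        intro u hP
        have hu2 : (u : ℕ × ℕ).2 = (w : ℕ × ℕ).2 := by
          rcases hP.2.2 with h | h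
          · exact absurd (hP.1 ▸ h) (fun hh => hw hh.symm)
          · exact h
        rw [show (u : ℕ × ℕ) = ((u : ℕ × ℕ).1, (u : ℕ × ℕ).2) from rfl, hP.1, hu2]
      by_cases hc : (x, (w : ℕ × ℕ).2) ∈ F
      · have hwy : (w : ℕ × ℕ).2 ≠ y := fun h => hxy (h ▸ hc)
        have hD : Dxy F x y w = 1 := by simp [Dxy, hw, hwy]
        set u0 : {p // p ∈ F} := ⟨(x, (w : ℕ × ℕ).2), hc⟩ with hu0
        have hbound : ∑ u : {p // p ∈ F},
            (if ((u : ℕ × ℕ).1 = x ∧ G.Adj u w) then (1:ℤ) else 0) ≤ 1 := by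
          have hle : ∀ u : {p // p ∈ F},
              (if ((u : ℕ × ℕ).1 = x ∧ G.Adj u w) then (1:ℤ) else 0)
                ≤ (if u = u0 then 1 else 0) := by
            intro u
            by_cases hP : ((u : ℕ × ℕ).1 = x ∧ G.Adj u w)
            · have huu : u = u0 := Subtype.ext (hval u hP)
              rw [if_pos hP, if_pos huu]
            · simp only [if_neg hP]
              split_ifs <;> norm_num
          calc ∑ u : {p // p ∈ F}, (if ((u : ℕ × ℕ).1 = x ∧ G.Adj u w) then (1:ℤ) else 0)
              ≤ ∑ u : {p // p ∈ F}, (if u = u0 then (1:ℤ) else 0) :=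
                Finset.sum_le_sum fun u _ => hle u
            _ = 1 := by simp
        rw [hlap, hD]
        omega
      · have hzero : ∑ u : {p // p ∈ F},
            (if ((u : ℕ × ℕ).1 = x ∧ G.Adj u w) then (1:ℤ) else 0) = 0 := by
          apply Finset.sum_eq_zero
          intro u _
          rw [if_neg]
          intro hP
          exact hc (hval u hP ▸ u.property)
        rw [hlap, hzero]
        have hD : (0:ℤ) ≤ Dxy F x y w := by unfold Dxy; positivity
        omega
  refine ⟨fun w => Dxy F x y w + lap G f w, ⟨f, fun w => rfl⟩, eff, ?_⟩
  exact lt_of_lt_of_le zero_lt_one (gain v hv)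

lemma ferrers_down {F : Finset (ℕ × ℕ)} (hF : IsFerrers F) :
    ∀ a b : ℕ, (a, b) ∈ F → (a, 1) ∈ F := by
  intro a b
  induction b with
  | zero => intro hb; exact absurd (hF _ hb).2.1 (by norm_num)
  | succ n ih =>
    intro hb
    rcases (hF _ hb).2.2.2 with h | h
    · rwa [← h]
    · exact ih (by simpa using h)

lemma row_case (F : Finset (ℕ × ℕ)) (hF : IsFerrers F) (x y : ℕ)
    (hy : 1 < y) (hxy : (x, y) ∉ F) (v : {p // p ∈ F}) (hv : (v : ℕ × ℕ).2 = y) :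
    ∃ D', LinEquiv (rookGraph F) (Dxy F x y) D' ∧ Effective D' ∧ 0 < D' v := by
  set G := rookGraph F with hG
  set f : {p // p ∈ F} → ℤ := fun u => if (u : ℕ × ℕ).2 ≠ y then 1 else 0 with hf
  have gain : ∀ w : {p // p ∈ F}, (w : ℕ × ℕ).2 = y →
      1 ≤ Dxy F x y w + lap G f w := by
    intro w hw
    have hfw : f w = 0 := by simp [hf, hw]
    have hD : Dxy F x y w = 0 := by simp [Dxy, hw]
    have hterm : ∀ u : {p // p ∈ F},
        f u * (if G.Adj u w then (1:ℤ) else 0)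
          = if ((u : ℕ × ℕ).2 ≠ y ∧ G.Adj u w) then 1 else 0 := by
      intro u
      by_cases h1 : (u : ℕ × ℕ).2 ≠ y <;> by_cases h2 : G.Adj u w <;>
        simp [hf, h1, h2]
    have hu0F : ((w : ℕ × ℕ).1, 1) ∈ F := ferrers_down hF _ _ w.property
    set u0 : {p // p ∈ F} := ⟨((w : ℕ × ℕ).1, 1), hu0F⟩ with hu0
    have hne : u0 ≠ w := by
      intro h
      have h1 : (u0 : ℕ × ℕ).2 = (w : ℕ × ℕ).2 := by rw [h]
      rw [hw] at h1
      have h2 : (1 : ℕ) = y := h1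
      omega
    have hP : ((u0 : ℕ × ℕ).2 ≠ y ∧ G.Adj u0 w) := by
      refine ⟨(by omega : (1:ℕ) ≠ y), hne, Or.inl rfl⟩
    have h1 : (1:ℤ) ≤ ∑ u : {p // p ∈ F}, f u * (if G.Adj u w then (1:ℤ) else 0) := by
      rw [Finset.sum_congr rfl fun u _ => hterm u]
      have := Finset.single_le_sum
        (f := fun u : {p // p ∈ F} => if ((u : ℕ × ℕ).2 ≠ y ∧ G.Adj u w) then (1:ℤ) else 0)
        (fun u _ => by positivity) (Finset.mem_univ u0)
      simpa [hP] using this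
    have hl : 1 ≤ lap G f w := by rw [lap, hfw]; simpa using h1
    omega
  have eff : ∀ w : {p // p ∈ F}, 0 ≤ Dxy F x y w + lap G f w := by
    intro w
    by_cases hw : (w : ℕ × ℕ).2 = y
    · exact le_trans zero_le_one (gain w hw)
    · have hfw : f w = 1 := by simp [hf, hw]
      have hsplit : ∀ u : {p // p ∈ F},
          f u * (if G.Adj u w then (1:ℤ) else 0)
            = (if G.Adj u w then (1:ℤ) else 0)
              - (if ((u : ℕ × ℕ).2 = y ∧ G.Adj u w) then 1 else 0) := by
        intro u
        by_cases h1 : (u : ℕ × ℕ).2 = y <;> by_cases h2 : G.Adj u w <;>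
          simp [hf, h1, h2]
      have hlap : lap G f w
          = - ∑ u : {p // p ∈ F}, (if ((u : ℕ × ℕ).2 = y ∧ G.Adj u w) then (1:ℤ) else 0) := by
        rw [lap, hfw, Finset.sum_congr rfl fun u _ => hsplit u, Finset.sum_sub_distrib]
        ring
      have hval : ∀ u : {p // p ∈ F}, ((u : ℕ × ℕ).2 = y ∧ G.Adj u w) →
          (u : ℕ × ℕ) = ((w : ℕ × ℕ).1, y) := by
        intro u hP
        have hu1 : (u : ℕ × ℕ).1 = (w : ℕ × ℕ).1 := by
          rcases hP.2.2 with h | h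
          · exact h
          · exact absurd (hP.1 ▸ h) (fun hh => hw hh.symm)
        rw [show (u : ℕ × ℕ) = ((u : ℕ × ℕ).1, (u : ℕ × ℕ).2) from rfl, hP.1, hu1]
      by_cases hc : ((w : ℕ × ℕ).1, y) ∈ F
      · have hwx : (w : ℕ × ℕ).1 ≠ x := fun h => hxy (h ▸ hc)
        have hD : Dxy F x y w = 1 := by simp [Dxy, hw, hwx]
        set u0 : {p // p ∈ F} := ⟨((w : ℕ × ℕ).1, y), hc⟩ with hu0
        have hbound : ∑ u : {p // p ∈ F},
            (if ((u : ℕ × ℕ).2 = y ∧ G.Adj u w) then (1:ℤ) else 0) ≤ 1 := by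
          have hle : ∀ u : {p // p ∈ F},
              (if ((u : ℕ × ℕ).2 = y ∧ G.Adj u w) then (1:ℤ) else 0)
                ≤ (if u = u0 then 1 else 0) := by
            intro u
            by_cases hP : ((u : ℕ × ℕ).2 = y ∧ G.Adj u w)
            · have huu : u = u0 := Subtype.ext (hval u hP)
              rw [if_pos hP, if_pos huu]
            · simp only [if_neg hP]
              split_ifs <;> norm_num
          calc ∑ u : {p // p ∈ F}, (if ((u : ℕ × ℕ).2 = y ∧ G.Adj u w) then (1:ℤ) else 0)
              ≤ ∑ u : {p // p ∈ F}, (if u = u0 then (1:ℤ) else 0) :=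
                Finset.sum_le_sum fun u _ => hle u
            _ = 1 := by simp
        rw [hlap, hD]
        omega
      · have hzero : ∑ u : {p // p ∈ F},
            (if ((u : ℕ × ℕ).2 = y ∧ G.Adj u w) then (1:ℤ) else 0) = 0 := by
          apply Finset.sum_eq_zero
          intro u _
          rw [if_neg]
          intro hP
          exact hc (hval u hP ▸ u.property)
        rw [hlap, hzero]
        have hD : (0:ℤ) ≤ Dxy F x y w := by unfold Dxy; positivity
        omega
  refine ⟨fun w => Dxy F x y w + lap G f w, ⟨f, fun w => rfl⟩, eff, ?_⟩
  exact lt_of_lt_of_le zero_lt_one (gain v hv)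

theorem stmt2 (F : Finset (ℕ × ℕ)) (hF : IsFerrers F) (x y : ℕ)
    (hx : 1 < x) (hy : 1 < y) (hxy : (x, y) ∉ F) :
    PositiveRank (rookGraph F) (Dxy F x y) := by
  intro v
  by_cases hv1 : (v : ℕ × ℕ).1 = x
  · exact col_case F hF x y hx hxy v hv1
  · by_cases hv2 : (v : ℕ × ℕ).2 = y
    · exact row_case F hF x y hy hxy v hv2
    · refine ⟨Dxy F x y, ⟨0, fun w => by simp [lap]⟩, ?_, ?_⟩
      · intro w
        unfold Dxy
        split_ifs <;> norm_num
      · unfold Dxy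
        rw [if_pos ⟨hv1, hv2⟩]
        norm_num
end

section
/- Let F be a Ferrers diagram whose first row has length k and second row has length ℓ. If (ℓ, k−ℓ+1) ∈ F, then the divisor D_{k+1,1} on R(F), the sum of all vertices not in the first row, has positive rank. -/
open Finset

open scoped Classical

/-! ### Auxiliary lemmas -/

lemma lap_eq' {V : Type*} [Fintype V] (G : SimpleGraph V) (f : V → ℤ) (w : V) :
    lap G f w = ∑ u ∈ univ.filter (fun u => G.Adj u w), (f u - f w) := by
  unfold lap
  rw [Finset.sum_sub_distrib, Finset.sum_const, nsmul_eq_mul]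
  congr 1
  · rw [Finset.sum_filter]
    apply Finset.sum_congr rfl
    intros; split <;> ring
  · rw [Finset.sum_boole]; ring

lemma lap_add' {V : Type*} [Fintype V] (G : SimpleGraph V) (f g : V → ℤ) (w : V) :
    lap G (fun u => f u + g u) w = lap G f w + lap G g w := by
  rw [lap_eq', lap_eq', lap_eq', ← Finset.sum_add_distrib]
  apply Finset.sum_congr rfl
  intros; ring

lemma lap_ind {V : Type*} [Fintype V] (G : SimpleGraph V) (P : V → Prop) (w : V) :
    lap G (fun u => if P u then (1:ℤ) else 0) w =
      (((univ.filter (fun u => G.Adj u w)).filter P).card : ℤ)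
        - if P w then (((univ.filter (fun u => G.Adj u w)).card : ℤ)) else 0 := by
  rw [lap_eq', Finset.sum_sub_distrib, Finset.sum_const, nsmul_eq_mul, Finset.sum_boole]
  split <;> simp

lemma lap_ind_pos {V : Type*} [Fintype V] (G : SimpleGraph V) (P : V → Prop) (w : V)
    (hw : ¬ P w) :
    lap G (fun u => if P u then (1:ℤ) else 0) w =
      (((univ.filter (fun u => G.Adj u w)).filter P).card : ℤ) := by
  rw [lap_ind]; simp [hw]

lemma lap_ind_neg {V : Type*} [Fintype V] (G : SimpleGraph V) (P : V → Prop) (w : V)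
    (hw : P w) :
    lap G (fun u => if P u then (1:ℤ) else 0) w =
      - (((univ.filter (fun u => G.Adj u w)).filter (fun u => ¬ P u)).card : ℤ) := by
  rw [lap_ind]
  simp only [hw, if_true]
  have := Finset.card_filter_add_card_filter_not
    (s := univ.filter (fun u => G.Adj u w)) (p := P)
  push_cast [← this]
  ring

lemma ferrers_down1 {F : Finset (ℕ × ℕ)} (hF : IsFerrers F) {b : ℕ} :
    ∀ a, (a, b) ∈ F → ∀ a', 1 ≤ a' → a' ≤ a → (a', b) ∈ F := by
  intro a
  induction a with
  | zero => intro h a' h1 h2; omega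
  | succ n ih =>
    intro h a' h1 h2
    rcases Nat.lt_or_ge a' (n+1) with hlt | hge
    · rcases (hF _ h).2.2.1 with h1' | h2'
      · omega
      · exact ih (by simpa using h2') a' h1 (by omega)
    · have : a' = n+1 := by omega
      subst this; exact h

lemma ferrers_down2 {F : Finset (ℕ × ℕ)} (hF : IsFerrers F) {a : ℕ} :
    ∀ b, (a, b) ∈ F → ∀ b', 1 ≤ b' → b' ≤ b → (a, b') ∈ F := by
  intro b
  induction b with
  | zero => intro h b' h1 h2; omega
  | succ n ih =>
    intro h b' h1 h2
    rcases Nat.lt_or_ge b' (n+1) with hlt | hge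
    · rcases (hF _ h).2.2.2 with h1' | h2'
      · omega
      · exact ih (by simpa using h2') b' h1 (by omega)
    · have : b' = n+1 := by omega
      subst this; exact h

lemma ferrers_down_s3 {F : Finset (ℕ × ℕ)} (hF : IsFerrers F) {a b a' b' : ℕ}
    (h : (a, b) ∈ F) (h1 : 1 ≤ a') (h2 : a' ≤ a) (h3 : 1 ≤ b') (h4 : b' ≤ b) :
    (a', b') ∈ F :=
  ferrers_down2 hF b (ferrers_down1 hF a h a' h1 h2) b' h3 h4

lemma rook_adj {F : Finset (ℕ × ℕ)} (u w : {p // p ∈ F}) :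
    (rookGraph F).Adj u w ↔
      u ≠ w ∧ ((u : ℕ × ℕ).1 = (w : ℕ × ℕ).1 ∨ (u : ℕ × ℕ).2 = (w : ℕ × ℕ).2) :=
  Iff.rfl

def Pone (F : Finset (ℕ × ℕ)) : {p // p ∈ F} → Prop := fun u => ¬ (u : ℕ × ℕ).2 = 1

def Ptwo (F : Finset (ℕ × ℕ)) (ℓ : ℕ) : {p // p ∈ F} → Prop := fun u => (u : ℕ × ℕ).1 ≤ ℓ

noncomputable def nbr (F : Finset (ℕ × ℕ)) (w : {p // p ∈ F}) : Finset {p // p ∈ F} :=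
  univ.filter (fun u => (rookGraph F).Adj u w)

lemma mem_nbr {F : Finset (ℕ × ℕ)} {u w : {p // p ∈ F}} :
    u ∈ nbr F w ↔
      u ≠ w ∧ ((u : ℕ × ℕ).1 = (w : ℕ × ℕ).1 ∨ (u : ℕ × ℕ).2 = (w : ℕ × ℕ).2) := by
  rw [nbr, Finset.mem_filter]
  simp [rook_adj]

lemma lap_pos' {F : Finset (ℕ × ℕ)} (P : {p // p ∈ F} → Prop) (w : {p // p ∈ F})
    (hw : ¬ P w) :
    lap (rookGraph F) (fun u => if P u then (1:ℤ) else 0) w =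
      (((nbr F w).filter P).card : ℤ) :=
  lap_ind_pos _ P w hw

lemma lap_neg' {F : Finset (ℕ × ℕ)} (P : {p // p ∈ F} → Prop) (w : {p // p ∈ F})
    (hw : P w) :
    lap (rookGraph F) (fun u => if P u then (1:ℤ) else 0) w =
      - (((nbr F w).filter (fun u => ¬ P u)).card : ℤ) :=
  lap_ind_neg _ P w hw

theorem stmt3 (F : Finset (ℕ × ℕ)) (hF : IsFerrers F) (k ℓ : ℕ)
    (hk : (k, 1) ∈ F) (hk' : (k + 1, 1) ∉ F)
    (hl : (ℓ, 2) ∈ F) (hl' : (ℓ + 1, 2) ∉ F)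
    (hcond : (ℓ, k - ℓ + 1) ∈ F) :
    PositiveRank (rookGraph F) (Dxy F (k + 1) 1) := by
  classical
  have hcoord : ∀ a b : ℕ, (a, b) ∈ F → 1 ≤ a ∧ 1 ≤ b := by
    intro a b h; exact ⟨(hF _ h).1, (hF _ h).2.1⟩
  have hmemF : ∀ u : {p // p ∈ F}, ((u : ℕ × ℕ).1, (u : ℕ × ℕ).2) ∈ F := fun u => by
    rw [Prod.mk.eta]; exact u.2
  have hle_k : ∀ a b : ℕ, (a, b) ∈ F → a ≤ k := by
    intro a b h
    by_contra hc
    exact hk' (ferrers_down_s3 hF h (by omega) (by omega) le_rfl (hcoord a b h).2)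
  have hle_l : ∀ a b : ℕ, (a, b) ∈ F → 2 ≤ b → a ≤ ℓ := by
    intro a b h hb
    by_contra hc
    exact hl' (ferrers_down_s3 hF h (by omega) (by omega) (by omega) hb)
  have hl1 : 1 ≤ ℓ := (hcoord _ _ hl).1
  have hl2 : (ℓ, 1) ∈ F := ferrers_down_s3 hF hl hl1 le_rfl le_rfl (by omega)
  have hlk : ℓ ≤ k := hle_k ℓ 1 hl2
  -- second coordinate 1 for vertices in columns > ℓ
  have hcol1 : ∀ u : {p // p ∈ F}, ℓ < (u : ℕ × ℕ).1 → (u : ℕ × ℕ).2 = 1 := by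
    intro u hu
    have h1 := (hcoord _ _ (hmemF u)).2
    by_contra h2
    have := hle_l (u : ℕ × ℕ).1 (u : ℕ × ℕ).2 (hmemF u) (by omega)
    omega
  -- value of the divisor
  have hD : ∀ p : {p // p ∈ F}, Dxy F (k + 1) 1 p = if (p : ℕ × ℕ).2 = 1 then 0 else 1 := by
    intro p
    have h1 : (p : ℕ × ℕ).1 ≠ k + 1 := by
      have := hle_k (p : ℕ × ℕ).1 (p : ℕ × ℕ).2 (hmemF p)
      omega
    unfold Dxy
    by_cases h : (p : ℕ × ℕ).2 = 1 <;> simp [h, h1]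
  -- fact1 : at most one neighbour in row 1, for a vertex not in row 1
  have fact1 : ∀ w : {p // p ∈ F}, ¬ (w : ℕ × ℕ).2 = 1 →
      ((nbr F w).filter (fun u => ¬ Pone F u)).card ≤ 1 := by
    intro w hw
    rw [Finset.card_le_one]
    intro u hu u' hu'
    rw [Finset.mem_filter] at hu hu'
    obtain ⟨hu, hu2⟩ := hu
    obtain ⟨hu', hu2'⟩ := hu'
    rw [mem_nbr] at hu hu'
    simp only [Pone, not_not] at hu2 hu2'
    have h1 : (u : ℕ × ℕ).1 = (w : ℕ × ℕ).1 := by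
      rcases hu.2 with h | h
      · exact h
      · exact absurd (h.symm.trans hu2) hw
    have h1' : (u' : ℕ × ℕ).1 = (w : ℕ × ℕ).1 := by
      rcases hu'.2 with h | h
      · exact h
      · exact absurd (h.symm.trans hu2') hw
    exact Subtype.ext (Prod.ext (h1.trans h1'.symm) (hu2.trans hu2'.symm))
  -- fact2 : no neighbour in columns > ℓ, for a vertex not in row 1
  have fact2 : ∀ w : {p // p ∈ F}, ¬ (w : ℕ × ℕ).2 = 1 →
      ((nbr F w).filter (fun u => ¬ Ptwo F ℓ u)) = ∅ := by
    intro w hw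
    rw [Finset.filter_eq_empty_iff]
    intro u hu
    rw [mem_nbr] at hu
    simp only [Ptwo, not_not, not_le, not_lt]
    by_contra hc
    push_neg at hc
    have hu2 : (u : ℕ × ℕ).2 = 1 := hcol1 u hc
    have hw2 : 2 ≤ (w : ℕ × ℕ).2 := by
      have := (hcoord _ _ (hmemF w)).2
      omega
    rcases hu.2 with h | h
    · have := hle_l (w : ℕ × ℕ).1 (w : ℕ × ℕ).2 (hmemF w) hw2
      omega
    · omega
  -- fact3 : the key injection
  have fact3 : ∀ w : {p // p ∈ F}, (w : ℕ × ℕ).2 = 1 → (w : ℕ × ℕ).1 ≤ ℓ →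
      ((nbr F w).filter (fun u => ¬ Ptwo F ℓ u)).card ≤ ((nbr F w).filter (Pone F)).card := by
    intro w hw hwl
    have hw1 : 1 ≤ (w : ℕ × ℕ).1 := (hcoord _ _ (hmemF w)).1
    apply Finset.card_le_card_of_injOn
      (fun (u : {p // p ∈ F}) => if h : ((w : ℕ × ℕ).1, (u : ℕ × ℕ).1 - ℓ + 1) ∈ F then
        (⟨((w : ℕ × ℕ).1, (u : ℕ × ℕ).1 - ℓ + 1), h⟩ : {p // p ∈ F}) else u)
    · intro u hu
      rw [Finset.mem_coe, Finset.mem_filter] at hu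
      obtain ⟨hu, hul⟩ := hu
      rw [mem_nbr] at hu
      simp only [Ptwo, not_le] at hul
      have hu2 : (u : ℕ × ℕ).2 = 1 := hcol1 u hul
      have huk : (u : ℕ × ℕ).1 ≤ k := hle_k _ _ (hmemF u)
      have hmem : ((w : ℕ × ℕ).1, (u : ℕ × ℕ).1 - ℓ + 1) ∈ F :=
        ferrers_down_s3 hF hcond hw1 hwl (by omega) (by omega)
      simp only [Finset.mem_coe]
      rw [dif_pos hmem, Finset.mem_filter, mem_nbr]
      refine ⟨⟨?_, Or.inl rfl⟩, ?_⟩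
      · intro he
        have h2 : (u : ℕ × ℕ).1 - ℓ + 1 = (w : ℕ × ℕ).2 :=
          congrArg Prod.snd (Subtype.ext_iff.mp he)
        omega
      · simp only [Pone]
        omega
    · intro u hu u' hu' he
      simp only [Finset.mem_coe, Finset.mem_filter] at hu hu'
      simp only at he
      obtain ⟨hu, hul⟩ := hu
      obtain ⟨hu', hul'⟩ := hu'
      simp only [Ptwo, not_le] at hul hul'
      have hu2 : (u : ℕ × ℕ).2 = 1 := hcol1 u hul
      have hu2' : (u' : ℕ × ℕ).2 = 1 := hcol1 u' hul'
      have huk : (u : ℕ × ℕ).1 ≤ k := hle_k _ _ (hmemF u)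
      have huk' : (u' : ℕ × ℕ).1 ≤ k := hle_k _ _ (hmemF u')
      have hmem : ((w : ℕ × ℕ).1, (u : ℕ × ℕ).1 - ℓ + 1) ∈ F :=
        ferrers_down_s3 hF hcond hw1 hwl (by omega) (by omega)
      have hmem' : ((w : ℕ × ℕ).1, (u' : ℕ × ℕ).1 - ℓ + 1) ∈ F :=
        ferrers_down_s3 hF hcond hw1 hwl (by omega) (by omega)
      rw [dif_pos hmem, dif_pos hmem'] at he
      have h2 : (u : ℕ × ℕ).1 - ℓ + 1 = (u' : ℕ × ℕ).1 - ℓ + 1 :=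
        congrArg Prod.snd (Subtype.ext_iff.mp he)
      have h1 : (u : ℕ × ℕ).1 = (u' : ℕ × ℕ).1 := by omega
      exact Subtype.ext (Prod.ext h1 (hu2.trans hu2'.symm))
  intro v
  obtain ⟨⟨a, b⟩, hv⟩ := v
  have hak : a ≤ k := hle_k a b hv
  by_cases hb : b = 1
  · subst hb
    by_cases hA : (a, 2) ∈ F
    · -- fire everything off row 1
      refine ⟨fun w => Dxy F (k + 1) 1 w +
          lap (rookGraph F) (fun u => if Pone F u then (1:ℤ) else 0) w,
        ⟨_, fun w => rfl⟩, ?_, ?_⟩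
      · intro w
        simp only [hD]
        by_cases hw : (w : ℕ × ℕ).2 = 1
        · rw [lap_pos' (Pone F) w (by simp [Pone, hw])]
          rw [if_pos hw]
          positivity
        · rw [lap_neg' (Pone F) w (by simp [Pone, hw])]
          have h1 := fact1 w hw
          have h2 : (((nbr F w).filter (fun u => ¬ Pone F u)).card : ℤ) ≤ 1 := by
            exact_mod_cast h1
          rw [if_neg hw]
          omega
      · simp only [hD]
        rw [lap_pos' (Pone F) ⟨(a,1), hv⟩ (by simp [Pone])]
        have hmem : (⟨(a, 2), hA⟩ : {p // p ∈ F}) ∈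
            (nbr F ⟨(a,1), hv⟩).filter (Pone F) := by
          rw [Finset.mem_filter, mem_nbr]
          refine ⟨⟨?_, Or.inl rfl⟩, by simp [Pone]⟩
          intro he
          have h2 : (2 : ℕ) = 1 := congrArg Prod.snd (Subtype.ext_iff.mp he)
          omega
        have hcard := Finset.card_pos.mpr ⟨_, hmem⟩
        have hcard' : (0:ℤ) < (((nbr F ⟨(a,1), hv⟩).filter (Pone F)).card : ℤ) := by
          exact_mod_cast hcard
        simp only [if_true]
        omega
    · -- a > ℓ : fire everything off row 1 and everything in columns ≤ ℓ
      have hal : ℓ < a := by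
        by_contra hc
        push_neg at hc
        exact hA (ferrers_down_s3 hF hl (hcoord a 1 hv).1 hc (by omega) le_rfl)
      refine ⟨fun w => Dxy F (k + 1) 1 w +
        lap (rookGraph F)
          (fun u => (if Pone F u then (1:ℤ) else 0) + (if Ptwo F ℓ u then (1:ℤ) else 0)) w,
        ⟨_, fun w => rfl⟩, ?_, ?_⟩
      · intro w
        simp only [hD]
        rw [lap_add']
        by_cases hw : (w : ℕ × ℕ).2 = 1
        · rw [lap_pos' (Pone F) w (by simp [Pone, hw])]
          by_cases hwl : (w : ℕ × ℕ).1 ≤ ℓ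
          · rw [lap_neg' (Ptwo F ℓ) w (by simpa [Ptwo] using hwl)]
            have h3 := fact3 w hw hwl
            have h3' : (((nbr F w).filter (fun u => ¬ Ptwo F ℓ u)).card : ℤ)
                ≤ (((nbr F w).filter (Pone F)).card : ℤ) := by exact_mod_cast h3
            rw [if_pos hw]
            omega
          · rw [lap_pos' (Ptwo F ℓ) w (by simpa [Ptwo] using hwl)]
            rw [if_pos hw]
            positivity
        · rw [lap_neg' (Pone F) w (by simp [Pone, hw]),
            lap_neg' (Ptwo F ℓ) w ?side]
          case side =>
            have hw2 : 2 ≤ (w : ℕ × ℕ).2 := by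
              have := (hcoord _ _ (hmemF w)).2
              omega
            simpa [Ptwo] using hle_l (w : ℕ × ℕ).1 (w : ℕ × ℕ).2 (hmemF w) hw2
          have h1 := fact1 w hw
          have h1' : (((nbr F w).filter (fun u => ¬ Pone F u)).card : ℤ) ≤ 1 := by
            exact_mod_cast h1
          have h2 := fact2 w hw
          rw [h2, if_neg hw]
          simp only [Finset.card_empty, Nat.cast_zero, neg_zero]
          omega
      · simp only [hD]
        rw [lap_add']
        rw [lap_pos' (Pone F) ⟨(a,1), hv⟩ (by simp [Pone]),
          lap_pos' (Ptwo F ℓ) ⟨(a,1), hv⟩ (by simp [Ptwo]; omega)]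
        have hmem : (⟨(ℓ, 1), hl2⟩ : {p // p ∈ F}) ∈
            (nbr F ⟨(a,1), hv⟩).filter (Ptwo F ℓ) := by
          rw [Finset.mem_filter, mem_nbr]
          refine ⟨⟨?_, Or.inr rfl⟩, by simp [Ptwo]⟩
          intro he
          have h2 : ℓ = a := congrArg Prod.fst (Subtype.ext_iff.mp he)
          omega
        have hcard := Finset.card_pos.mpr ⟨_, hmem⟩
        have hcard' : (0:ℤ) < (((nbr F ⟨(a,1), hv⟩).filter (Ptwo F ℓ)).card : ℤ) := by
          exact_mod_cast hcard
        have hcard2 : (0:ℤ) ≤ (((nbr F ⟨(a,1), hv⟩).filter (Pone F)).card : ℤ) := by positivity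
        simp only [if_true]
        omega
  · -- v is not in row 1 : the divisor itself has a chip at v
    refine ⟨Dxy F (k + 1) 1, ⟨fun _ => 0, fun w => by simp [lap_eq']⟩, ?_, ?_⟩
    · intro w
      simp only [hD]
      split <;> norm_num
    · simp only [hD]
      simp [hb]
end

section
/- The gonality of the Ferrers rook graph R(T_3) of the staircase triangle T_3 = {(x,y) ∈ ℕ² : x,y ≥ 1, x + y ≤ 4} equals 3. -/
open Finset

open scoped Classical

/-- The staircase triangle `T_n`. -/
def Tn (n : ℕ) : Finset (ℕ × ℕ) :=
  ((Finset.Icc 1 n) ×ˢ (Finset.Icc 1 n)).filter (fun p => p.1 + p.2 ≤ n + 1)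



/-! ### Auxiliary setup for `T₃` -/

abbrev V3 : Type := {p : ℕ × ℕ // p ∈ Tn 3}
def a1 : V3 := ⟨(1,1), by decide⟩
def a2 : V3 := ⟨(1,2), by decide⟩
def a3 : V3 := ⟨(1,3), by decide⟩
def a4 : V3 := ⟨(2,1), by decide⟩
def a5 : V3 := ⟨(2,2), by decide⟩
def a6 : V3 := ⟨(3,1), by decide⟩

lemma cases_V3 : ∀ v : V3, v = a1 ∨ v = a2 ∨ v = a3 ∨ v = a4 ∨ v = a5 ∨ v = a6 := by decide

lemma huniv : (Finset.univ : Finset V3) = {a1,a2,a3,a4,a5,a6} := by decide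

lemma sum_V3 (g : V3 → ℤ) : ∑ v, g v = g a1 + g a2 + g a3 + g a4 + g a5 + g a6 := by
  rw [huniv]
  rw [Finset.sum_insert (by decide), Finset.sum_insert (by decide), Finset.sum_insert (by decide),
    Finset.sum_insert (by decide), Finset.sum_insert (by decide), Finset.sum_singleton]
  ring

/-- computable adjacency indicator -/
def adjI (u w : V3) : ℤ :=
  if (u:ℕ×ℕ) ≠ (w:ℕ×ℕ) ∧ ((u:ℕ×ℕ).1 = (w:ℕ×ℕ).1 ∨ (u:ℕ×ℕ).2 = (w:ℕ×ℕ).2) then 1 else 0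

lemma adjI_comm : ∀ u w : V3, adjI u w = adjI w u := by decide

lemma if_adj (u w : V3) : (if (rookGraph (Tn 3)).Adj u w then (1:ℤ) else 0) = adjI u w := by
  unfold adjI
  refine if_congr ?_ rfl rfl
  show ((u ≠ w) ∧ _) ↔ _
  rw [ne_eq, Subtype.ext_iff, ← ne_eq]

/-- computable Laplacian action -/
def lapC (f : V3 → ℤ) (w : V3) : ℤ := (∑ u, f u * adjI u w) - f w * (∑ u, adjI u w)

lemma lap_eq_lapC (f : V3 → ℤ) (w : V3) : lap (rookGraph (Tn 3)) f w = lapC f w := by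
  unfold lap lapC
  congr 1
  · exact Finset.sum_congr rfl fun u _ => by rw [if_adj]
  · congr 1
    exact Finset.sum_congr rfl fun u _ => if_adj u w

lemma sum_c_lapC (c f : V3 → ℤ) :
    ∑ w, c w * lapC f w = ∑ u, f u * ((∑ w, c w * adjI u w) - c u * (∑ w, adjI u w)) := by
  unfold lapC
  simp only [mul_sub, Finset.mul_sum, Finset.sum_sub_distrib]
  congr 1
  · rw [Finset.sum_comm]
    exact Finset.sum_congr rfl fun u _ => Finset.sum_congr rfl fun w _ => by ring
  · exact Finset.sum_congr rfl fun w _ => Finset.sum_congr rfl fun i _ => by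
      rw [adjI_comm i w]; ring

lemma deg_lap (f : V3 → ℤ) : ∑ w, lap (rookGraph (Tn 3)) f w = 0 := by
  calc ∑ w, lap (rookGraph (Tn 3)) f w = ∑ w, (1:ℤ) * lapC f w := by
        exact Finset.sum_congr rfl fun w _ => by rw [lap_eq_lapC, one_mul]
    _ = ∑ u, f u * ((∑ w, (1:ℤ) * adjI u w) - 1 * (∑ w, adjI u w)) := sum_c_lapC _ f
    _ = 0 := by simp

/-- the modulo-30 invariant functional -/
def cInv : V3 → ℤ := fun p =>
  if (p:ℕ×ℕ) = (1,1) then -1 else if (p:ℕ×ℕ) = (1,2) then 7 else if (p:ℕ×ℕ) = (1,3) then 18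
  else if (p:ℕ×ℕ) = (2,1) then 1 else if (p:ℕ×ℕ) = (2,2) then 4 else 0

lemma cInv_a1 : cInv a1 = -1 := by decide
lemma cInv_a2 : cInv a2 = 7 := by decide
lemma cInv_a3 : cInv a3 = 18 := by decide
lemma cInv_a4 : cInv a4 = 1 := by decide
lemma cInv_a5 : cInv a5 = 4 := by decide
lemma cInv_a6 : cInv a6 = 0 := by decide

lemma inv_col : ∀ u : V3,
    ((∑ w, cInv w * adjI u w) - cInv u * (∑ w, adjI u w)) % 30 = 0 := by decide

lemma inv_lap (f : V3 → ℤ) : (30:ℤ) ∣ ∑ w, cInv w * lap (rookGraph (Tn 3)) f w := by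
  have h : ∑ w, cInv w * lap (rookGraph (Tn 3)) f w = ∑ w, cInv w * lapC f w :=
    Finset.sum_congr rfl fun w _ => by rw [lap_eq_lapC]
  rw [h, sum_c_lapC]
  refine Finset.dvd_sum fun u _ => Dvd.dvd.mul_left ?_ (f u)
  exact Int.dvd_of_emod_eq_zero (inv_col u)

/-- Any effective divisor of degree at most 2 with a chip at `v` has invariant value
`cInv v + cInv u` for some vertex `u`. -/
lemma classify (E : V3 → ℤ) (heff : Effective E) (hdeg : degD E ≤ 2) (v : V3) (hv : 0 < E v) :
    ∃ u : V3, (∑ w, cInv w * E w) = cInv v + cInv u := by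
  have h1 := heff a1; have h2 := heff a2; have h3 := heff a3
  have h4 := heff a4; have h5 := heff a5; have h6 := heff a6
  rw [degD, sum_V3] at hdeg
  rw [sum_V3 (fun w => cInv w * E w)]
  rcases cases_V3 v with h|h|h|h|h|h <;> subst h
  · by_cases hba2 : 0 < E a2
    · exact ⟨a2, by simp only [cInv_a1, cInv_a2, cInv_a3, cInv_a4, cInv_a5, cInv_a6]; omega⟩
    by_cases hba3 : 0 < E a3
    · exact ⟨a3, by simp only [cInv_a1, cInv_a2, cInv_a3, cInv_a4, cInv_a5, cInv_a6]; omega⟩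
    by_cases hba4 : 0 < E a4
    · exact ⟨a4, by simp only [cInv_a1, cInv_a2, cInv_a3, cInv_a4, cInv_a5, cInv_a6]; omega⟩
    by_cases hba5 : 0 < E a5
    · exact ⟨a5, by simp only [cInv_a1, cInv_a2, cInv_a3, cInv_a4, cInv_a5, cInv_a6]; omega⟩
    by_cases hba6 : 0 < E a6
    · exact ⟨a6, by simp only [cInv_a1, cInv_a2, cInv_a3, cInv_a4, cInv_a5, cInv_a6]; omega⟩
    by_cases hbv : 2 ≤ E a1
    · exact ⟨a1, by simp only [cInv_a1, cInv_a2, cInv_a3, cInv_a4, cInv_a5, cInv_a6]; omega⟩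
    · exact ⟨a6, by simp only [cInv_a1, cInv_a2, cInv_a3, cInv_a4, cInv_a5, cInv_a6]; omega⟩
  · by_cases hba1 : 0 < E a1
    · exact ⟨a1, by simp only [cInv_a1, cInv_a2, cInv_a3, cInv_a4, cInv_a5, cInv_a6]; omega⟩
    by_cases hba3 : 0 < E a3
    · exact ⟨a3, by simp only [cInv_a1, cInv_a2, cInv_a3, cInv_a4, cInv_a5, cInv_a6]; omega⟩
    by_cases hba4 : 0 < E a4
    · exact ⟨a4, by simp only [cInv_a1, cInv_a2, cInv_a3, cInv_a4, cInv_a5, cInv_a6]; omega⟩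
    by_cases hba5 : 0 < E a5
    · exact ⟨a5, by simp only [cInv_a1, cInv_a2, cInv_a3, cInv_a4, cInv_a5, cInv_a6]; omega⟩
    by_cases hba6 : 0 < E a6
    · exact ⟨a6, by simp only [cInv_a1, cInv_a2, cInv_a3, cInv_a4, cInv_a5, cInv_a6]; omega⟩
    by_cases hbv : 2 ≤ E a2
    · exact ⟨a2, by simp only [cInv_a1, cInv_a2, cInv_a3, cInv_a4, cInv_a5, cInv_a6]; omega⟩
    · exact ⟨a6, by simp only [cInv_a1, cInv_a2, cInv_a3, cInv_a4, cInv_a5, cInv_a6]; omega⟩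
  · by_cases hba1 : 0 < E a1
    · exact ⟨a1, by simp only [cInv_a1, cInv_a2, cInv_a3, cInv_a4, cInv_a5, cInv_a6]; omega⟩
    by_cases hba2 : 0 < E a2
    · exact ⟨a2, by simp only [cInv_a1, cInv_a2, cInv_a3, cInv_a4, cInv_a5, cInv_a6]; omega⟩
    by_cases hba4 : 0 < E a4
    · exact ⟨a4, by simp only [cInv_a1, cInv_a2, cInv_a3, cInv_a4, cInv_a5, cInv_a6]; omega⟩
    by_cases hba5 : 0 < E a5
    · exact ⟨a5, by simp only [cInv_a1, cInv_a2, cInv_a3, cInv_a4, cInv_a5, cInv_a6]; omega⟩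
    by_cases hba6 : 0 < E a6
    · exact ⟨a6, by simp only [cInv_a1, cInv_a2, cInv_a3, cInv_a4, cInv_a5, cInv_a6]; omega⟩
    by_cases hbv : 2 ≤ E a3
    · exact ⟨a3, by simp only [cInv_a1, cInv_a2, cInv_a3, cInv_a4, cInv_a5, cInv_a6]; omega⟩
    · exact ⟨a6, by simp only [cInv_a1, cInv_a2, cInv_a3, cInv_a4, cInv_a5, cInv_a6]; omega⟩
  · by_cases hba1 : 0 < E a1
    · exact ⟨a1, by simp only [cInv_a1, cInv_a2, cInv_a3, cInv_a4, cInv_a5, cInv_a6]; omega⟩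
    by_cases hba2 : 0 < E a2
    · exact ⟨a2, by simp only [cInv_a1, cInv_a2, cInv_a3, cInv_a4, cInv_a5, cInv_a6]; omega⟩
    by_cases hba3 : 0 < E a3
    · exact ⟨a3, by simp only [cInv_a1, cInv_a2, cInv_a3, cInv_a4, cInv_a5, cInv_a6]; omega⟩
    by_cases hba5 : 0 < E a5
    · exact ⟨a5, by simp only [cInv_a1, cInv_a2, cInv_a3, cInv_a4, cInv_a5, cInv_a6]; omega⟩
    by_cases hba6 : 0 < E a6
    · exact ⟨a6, by simp only [cInv_a1, cInv_a2, cInv_a3, cInv_a4, cInv_a5, cInv_a6]; omega⟩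
    by_cases hbv : 2 ≤ E a4
    · exact ⟨a4, by simp only [cInv_a1, cInv_a2, cInv_a3, cInv_a4, cInv_a5, cInv_a6]; omega⟩
    · exact ⟨a6, by simp only [cInv_a1, cInv_a2, cInv_a3, cInv_a4, cInv_a5, cInv_a6]; omega⟩
  · by_cases hba1 : 0 < E a1
    · exact ⟨a1, by simp only [cInv_a1, cInv_a2, cInv_a3, cInv_a4, cInv_a5, cInv_a6]; omega⟩
    by_cases hba2 : 0 < E a2
    · exact ⟨a2, by simp only [cInv_a1, cInv_a2, cInv_a3, cInv_a4, cInv_a5, cInv_a6]; omega⟩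
    by_cases hba3 : 0 < E a3
    · exact ⟨a3, by simp only [cInv_a1, cInv_a2, cInv_a3, cInv_a4, cInv_a5, cInv_a6]; omega⟩
    by_cases hba4 : 0 < E a4
    · exact ⟨a4, by simp only [cInv_a1, cInv_a2, cInv_a3, cInv_a4, cInv_a5, cInv_a6]; omega⟩
    by_cases hba6 : 0 < E a6
    · exact ⟨a6, by simp only [cInv_a1, cInv_a2, cInv_a3, cInv_a4, cInv_a5, cInv_a6]; omega⟩
    by_cases hbv : 2 ≤ E a5
    · exact ⟨a5, by simp only [cInv_a1, cInv_a2, cInv_a3, cInv_a4, cInv_a5, cInv_a6]; omega⟩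
    · exact ⟨a6, by simp only [cInv_a1, cInv_a2, cInv_a3, cInv_a4, cInv_a5, cInv_a6]; omega⟩
  · by_cases hba1 : 0 < E a1
    · exact ⟨a1, by simp only [cInv_a1, cInv_a2, cInv_a3, cInv_a4, cInv_a5, cInv_a6]; omega⟩
    by_cases hba2 : 0 < E a2
    · exact ⟨a2, by simp only [cInv_a1, cInv_a2, cInv_a3, cInv_a4, cInv_a5, cInv_a6]; omega⟩
    by_cases hba3 : 0 < E a3
    · exact ⟨a3, by simp only [cInv_a1, cInv_a2, cInv_a3, cInv_a4, cInv_a5, cInv_a6]; omega⟩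
    by_cases hba4 : 0 < E a4
    · exact ⟨a4, by simp only [cInv_a1, cInv_a2, cInv_a3, cInv_a4, cInv_a5, cInv_a6]; omega⟩
    by_cases hba5 : 0 < E a5
    · exact ⟨a5, by simp only [cInv_a1, cInv_a2, cInv_a3, cInv_a4, cInv_a5, cInv_a6]; omega⟩
    by_cases hbv : 2 ≤ E a6
    · exact ⟨a6, by simp only [cInv_a1, cInv_a2, cInv_a3, cInv_a4, cInv_a5, cInv_a6]; omega⟩
    · exact ⟨a6, by simp only [cInv_a1, cInv_a2, cInv_a3, cInv_a4, cInv_a5, cInv_a6]; omega⟩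

lemma key30 : ∀ u1 u2 u4 : V3,
    ¬((((cInv a1 + cInv u1) - (cInv a2 + cInv u2)) % 30 = 0) ∧
      (((cInv a1 + cInv u1) - (cInv a4 + cInv u4)) % 30 = 0)) := by decide

/-- the degree `3` divisor of positive rank -/
def Dd : V3 → ℤ := fun p =>
  if (p:ℕ×ℕ) = (1,2) ∨ (p:ℕ×ℕ) = (1,3) ∨ (p:ℕ×ℕ) = (2,2) then 1 else 0
def Ea : V3 → ℤ := fun p => if (p:ℕ×ℕ) = (1,1) then 2 else if (p:ℕ×ℕ) = (2,1) then 1 else 0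
def fC : V3 → ℤ := fun p =>
  if (p:ℕ×ℕ) = (3,1) then 0 else if (p:ℕ×ℕ) = (1,1) ∨ (p:ℕ×ℕ) = (2,1) then 1 else 2
def Ec : V3 → ℤ := fun p => if (p:ℕ×ℕ) = (1,1) then 1 else if (p:ℕ×ℕ) = (3,1) then 2 else 0

lemma posrank_Dd : PositiveRank (rookGraph (Tn 3)) Dd := by
  intro v
  have hEa : LinEquiv (rookGraph (Tn 3)) Dd Ea :=
    ⟨Dd, fun w => by rw [lap_eq_lapC]; revert w; decide⟩
  have hEc : LinEquiv (rookGraph (Tn 3)) Dd Ec :=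
    ⟨fC, fun w => by rw [lap_eq_lapC]; revert w; decide⟩
  have hself : LinEquiv (rookGraph (Tn 3)) Dd Dd :=
    ⟨fun _ => 0, fun w => by rw [lap_eq_lapC]; revert w; decide⟩
  rcases cases_V3 v with h|h|h|h|h|h <;> subst h
  · exact ⟨Ea, hEa, by unfold Effective; decide, by decide⟩
  · exact ⟨Dd, hself, by unfold Effective; decide, by decide⟩
  · exact ⟨Dd, hself, by unfold Effective; decide, by decide⟩
  · exact ⟨Ea, hEa, by unfold Effective; decide, by decide⟩
  · exact ⟨Dd, hself, by unfold Effective; decide, by decide⟩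
  · exact ⟨Ec, hEc, by unfold Effective; decide, by decide⟩

theorem stmt9 : IsLeast (gonSet (Tn 3)) 3 := by
  constructor
  · exact ⟨Dd, posrank_Dd, by rw [degD, sum_V3]; decide⟩
  · rintro d ⟨D, hpos, hdeg⟩
    by_contra hlt
    push_neg at hlt
    have key : ∀ (D' : V3 → ℤ), LinEquiv (rookGraph (Tn 3)) D D' →
        degD D' = d ∧ (30:ℤ) ∣ (∑ w, cInv w * D' w) - (∑ w, cInv w * D w) := by
      rintro D' ⟨f, hf⟩
      constructor
      · rw [← hdeg]
        unfold degD
        rw [Finset.sum_congr rfl fun w _ => hf w, Finset.sum_add_distrib, deg_lap, add_zero]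
      · have h : ∑ w, cInv w * D' w
            = (∑ w, cInv w * D w) + ∑ w, cInv w * lap (rookGraph (Tn 3)) f w := by
          rw [← Finset.sum_add_distrib]
          exact Finset.sum_congr rfl fun w _ => by rw [hf w]; ring
        rw [h]
        simpa using inv_lap f
    obtain ⟨D1, he1, hf1, hp1⟩ := hpos a1
    obtain ⟨D2, he2, hf2, hp2⟩ := hpos a2
    obtain ⟨D4, he4, hf4, hp4⟩ := hpos a4
    obtain ⟨hd1, hc1⟩ := key D1 he1
    obtain ⟨hd2, hc2⟩ := key D2 he2
    obtain ⟨hd4, hc4⟩ := key D4 he4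
    obtain ⟨u1, hu1⟩ := classify D1 hf1 (by omega) a1 hp1
    obtain ⟨u2, hu2⟩ := classify D2 hf2 (by omega) a2 hp2
    obtain ⟨u4, hu4⟩ := classify D4 hf4 (by omega) a4 hp4
    have h12 : (30:ℤ) ∣ (cInv a1 + cInv u1) - (cInv a2 + cInv u2) := by
      have h := dvd_sub hc1 hc2
      rw [sub_sub_sub_cancel_right, hu1, hu2] at h
      exact h
    have h14 : (30:ℤ) ∣ (cInv a1 + cInv u1) - (cInv a4 + cInv u4) := by
      have h := dvd_sub hc1 hc4
      rw [sub_sub_sub_cancel_right, hu1, hu4] at h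
      exact h
    exact key30 u1 u2 u4 ⟨Int.emod_eq_zero_of_dvd h12, Int.emod_eq_zero_of_dvd h14⟩
end

section
/- Let F be a Ferrers diagram, D an effective divisor on R(F), and fix x so that every one of the first x columns of F is nonempty. If running Dhar's burning algorithm from a vertex v with D(v) = 0 burns at least one but not all vertices in some column among the first x columns, and that column has n vertices of which k are unburnt (1 ≤ k ≤ n−1), then after firing the set of unburnt vertices, that column contains at least k(n−k) ≥ n−1 chips. -/
open Finset

open scoped Classical

/-- Dhar's burning algorithm, started at `v`: `v` burns, and a vertex `u` burns as soon
as the number of already-burnt neighbors of `u` strictly exceeds `D u`. -/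
inductive Burnt {V : Type*} (G : SimpleGraph V) (D : V → ℤ) (v : V) : V → Prop
  | start : Burnt G D v v
  | step (u : V) (S : Finset V) (hS : ∀ w ∈ S, Burnt G D v w)
      (hadj : ∀ w ∈ S, G.Adj w u) (hcard : D u < (S.card : ℤ)) : Burnt G D v u

/-- Firing a set `A` of vertices: each vertex of `A` sends one chip along each edge
leaving `A`. -/
noncomputable def fireSet {V : Type*} [Fintype V] (G : SimpleGraph V) (D : V → ℤ)
    (A : Finset V) : V → ℤ :=
  fun w =>
    if w ∈ A then D w - ((Finset.univ.filter (fun u => u ∉ A ∧ G.Adj w u)).card : ℤ)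
    else D w + ((A.filter (fun u => G.Adj u w)).card : ℤ)

theorem stmt13 (F : Finset (ℕ × ℕ)) (hF : IsFerrers F)
    (D : {p // p ∈ F} → ℤ) (hD : Effective D)
    (x : ℕ) (hcols : ∀ x', 1 ≤ x' → x' ≤ x → (x', 1) ∈ F)
    (v : {p // p ∈ F}) (hv : D v = 0)
    (c : ℕ) (hc1 : 1 ≤ c) (hc2 : c ≤ x)
    (col : Finset {p // p ∈ F})
    (hcol : col = Finset.univ.filter (fun p : {p // p ∈ F} => (p : ℕ × ℕ).1 = c))
    (A : Finset {p // p ∈ F})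
    (hA : A = Finset.univ.filter (fun p : {p // p ∈ F} => ¬ Burnt (rookGraph F) D v p))
    (n k : ℕ) (hn : n = col.card) (hk : k = (col.filter (fun p => p ∈ A)).card)
    (hk1 : 1 ≤ k) (hk2 : k ≤ n - 1) :
    ((k : ℤ) * ((n : ℤ) - k) ≤ ∑ p ∈ col, fireSet (rookGraph F) D A p) ∧
      ((n : ℤ) - 1 ≤ (k : ℤ) * ((n : ℤ) - k)) := by
  have hkn : k ≤ n := by
    rw [hn, hk]; exact Finset.card_le_card (Finset.filter_subset _ _)
  have hA' : ∀ p : {p // p ∈ F}, p ∈ A ↔ ¬ Burnt (rookGraph F) D v p := by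
    intro p; rw [hA]; simp
  refine ⟨?_, ?_⟩
  · have h1 : ∀ p ∈ col.filter (fun p => p ∈ A), 0 ≤ fireSet (rookGraph F) D A p := by
      intro p hp
      simp only [Finset.mem_filter] at hp
      obtain ⟨hpc, hpA⟩ := hp
      unfold fireSet
      rw [if_pos hpA, sub_nonneg]
      by_contra h
      push_neg at h
      apply (hA' p).mp hpA
      refine Burnt.step p _ ?_ ?_ h
      · intro w hw
        simp only [Finset.mem_filter, Finset.mem_univ, true_and] at hw
        have : ¬ ¬ Burnt (rookGraph F) D v w := fun hb => hw.1 ((hA' w).mpr hb)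
        exact not_not.mp this
      · intro w hw
        simp only [Finset.mem_filter, Finset.mem_univ, true_and] at hw
        exact (rookGraph F).adj_symm hw.2
    have h2 : ∀ p ∈ col.filter (fun p => p ∉ A), (k : ℤ) ≤ fireSet (rookGraph F) D A p := by
      intro p hp
      simp only [Finset.mem_filter] at hp
      obtain ⟨hpc, hpA⟩ := hp
      unfold fireSet
      rw [if_neg hpA]
      have hsub : col.filter (fun p => p ∈ A) ⊆ A.filter (fun u => (rookGraph F).Adj u p) := by
        intro q hq
        simp only [Finset.mem_filter] at hq ⊢
        refine ⟨hq.2, show _ ∧ _ from ⟨?_, Or.inl ?_⟩⟩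
        · rintro rfl; exact hpA hq.2
        · have hqc : (q : ℕ × ℕ).1 = c := by
            have := hq.1; rw [hcol] at this; simpa using this
          have hpc' : (p : ℕ × ℕ).1 = c := by
            rw [hcol] at hpc; simpa using hpc
          rw [hqc, hpc']
      have hle := Finset.card_le_card hsub
      have hDp := hD p
      rw [hk] at *
      have : ((col.filter (fun p => p ∈ A)).card : ℤ) ≤
          ((A.filter (fun u => (rookGraph F).Adj u p)).card : ℤ) := by exact_mod_cast hle
      linarith
    have hcards : (col.filter (fun p => p ∈ A)).card + (col.filter (fun p => p ∉ A)).card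
        = col.card := Finset.card_filter_add_card_filter_not _
    have s1 : 0 ≤ ∑ p ∈ col.filter (fun p => p ∈ A), fireSet (rookGraph F) D A p :=
      Finset.sum_nonneg h1
    have s2 : ((col.filter (fun p => p ∉ A)).card : ℤ) * k ≤
        ∑ p ∈ col.filter (fun p => p ∉ A), fireSet (rookGraph F) D A p := by
      have := Finset.card_nsmul_le_sum (col.filter (fun p => p ∉ A)) _ (k : ℤ) h2
      simpa [nsmul_eq_mul] using this
    have hc2' : ((col.filter (fun p => p ∉ A)).card : ℤ) = (n : ℤ) - k := by
      have : (col.filter (fun p => p ∉ A)).card = n - k := by omega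
      rw [this]; push_cast [Nat.cast_sub hkn]; ring
    rw [← Finset.sum_filter_add_sum_filter_not col (fun p => p ∈ A)]
    rw [hc2'] at s2
    nlinarith
  · have hk1' : (1 : ℤ) ≤ (k : ℤ) := by exact_mod_cast hk1
    have hkn' : (k : ℤ) + 1 ≤ (n : ℤ) := by exact_mod_cast (by omega : k + 1 ≤ n)
    nlinarith
end

section
/- On the complete graph K_n, if every vertex has fewer than n−1 chips and for each i with 1 ≤ i ≤ n−1 fewer than n−i vertices have at least i chips, then Dhar's burning algorithm started at any vertex v with zero chips burns every vertex of K_n. -/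
open Finset

open scoped Classical

theorem stmt14 (n : ℕ) (D : Fin n → ℤ) (hD : Effective D)
    (hmax : ∀ v, D v < (n : ℤ) - 1)
    (h : ∀ i : ℕ, 1 ≤ i → i ≤ n - 1 →
      (Finset.univ.filter (fun v => (i : ℤ) ≤ D v)).card < n - i)
    (v : Fin n) (hv : D v = 0) :
    ∀ u, Burnt (⊤ : SimpleGraph (Fin n)) D v u := by
  classical
  intro u
  by_contra hu
  set B : Finset (Fin n) := Finset.univ.filter
    (fun w => Burnt (⊤ : SimpleGraph (Fin n)) D v w) with hB
  have hBmem : ∀ w, w ∈ B ↔ Burnt (⊤ : SimpleGraph (Fin n)) D v w := by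
    intro w; simp [hB]
  have hvB : v ∈ B := (hBmem v).2 Burnt.start
  have huB : u ∉ B := fun hmem => hu ((hBmem u).1 hmem)
  have hk1 : 1 ≤ B.card := Finset.card_pos.2 ⟨v, hvB⟩
  have hklt : B.card < n := by
    have hne : B ≠ Finset.univ := fun hEq => huB (hEq ▸ Finset.mem_univ u)
    have := Finset.card_lt_card (Finset.ssubset_univ_iff.mpr hne)
    simpa using this
  have hex : ∃ w, w ∉ B ∧ D w < (B.card : ℤ) := by
    by_contra hc
    push_neg at hc
    have hsub : Bᶜ ⊆ Finset.univ.filter (fun w => ((B.card : ℕ) : ℤ) ≤ D w) := by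
      intro w hw
      rw [Finset.mem_compl] at hw
      simp [hc w hw]
    have hcardc : Bᶜ.card = n - B.card := by simp [Finset.card_compl]
    have hle := Finset.card_le_card hsub
    have hh := h B.card hk1 (by omega)
    omega
  obtain ⟨w, hwB, hwlt⟩ := hex
  exact hwB ((hBmem w).2 (Burnt.step w B (fun x hx => (hBmem x).1 hx)
    (fun x hx => by
      have hne : x ≠ w := fun he => hwB (he ▸ hx)
      simpa [SimpleGraph.top_adj] using hne) hwlt))
end

section
/- The gonality of the Ferrers rook graph of the Ferrers diagram with row lengths (4,2,1) equals 4. -/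
open Finset

open scoped Classical

def F1 : Finset (ℕ × ℕ) := {(1, 1), (2, 1), (3, 1), (4, 1), (1, 2), (2, 2), (1, 3)}


abbrev Vt := {p // p ∈ F1}

instance : DecidableRel (rookGraph F1).Adj :=
  fun a b => decidable_of_iff (a ≠ b ∧ ((a : ℕ × ℕ).1 = (b : ℕ × ℕ).1 ∨ (a : ℕ × ℕ).2 = (b : ℕ × ℕ).2)) Iff.rfl
def w0 : Vt := ⟨(1,1), by decide⟩
def w1 : Vt := ⟨(2,1), by decide⟩
def w2 : Vt := ⟨(3,1), by decide⟩
def w3 : Vt := ⟨(4,1), by decide⟩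
def w4 : Vt := ⟨(1,2), by decide⟩
def w5 : Vt := ⟨(2,2), by decide⟩
def w6 : Vt := ⟨(1,3), by decide⟩

lemma univ_eq : (Finset.univ : Finset Vt) = {w0, w1, w2, w3, w4, w5, w6} := by decide

lemma sum_univ (g : Vt → ℤ) :
    ∑ v, g v = g w0 + g w1 + g w2 + g w3 + g w4 + g w5 + g w6 := by
  rw [univ_eq]
  rw [Finset.sum_insert (by decide), Finset.sum_insert (by decide),
      Finset.sum_insert (by decide), Finset.sum_insert (by decide),
      Finset.sum_insert (by decide), Finset.sum_insert (by decide),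
      Finset.sum_singleton]
  ring

lemma forall_V (P : Vt → Prop) (h0 : P w0) (h1 : P w1) (h2 : P w2) (h3 : P w3)
    (h4 : P w4) (h5 : P w5) (h6 : P w6) : ∀ v, P v := by
  rintro ⟨p, hp⟩
  fin_cases hp
  exacts [h0, h1, h2, h3, h4, h5, h6]

lemma lap0 (f : Vt → ℤ) : lap (rookGraph F1) f w0 = (-5) * f w0 + f w1 + f w2 + f w3 + f w4 + f w6 := by
  unfold lap
  rw [sum_univ, sum_univ]
  simp only [if_neg (show ¬ (rookGraph F1).Adj w0 w0 by decide), if_pos (show (rookGraph F1).Adj w1 w0 by decide), if_pos (show (rookGraph F1).Adj w2 w0 by decide), if_pos (show (rookGraph F1).Adj w3 w0 by decide), if_pos (show (rookGraph F1).Adj w4 w0 by decide), if_neg (show ¬ (rookGraph F1).Adj w5 w0 by decide), if_pos (show (rookGraph F1).Adj w6 w0 by decide)]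
  ring

lemma lap1 (f : Vt → ℤ) : lap (rookGraph F1) f w1 = f w0 + (-4) * f w1 + f w2 + f w3 + f w5 := by
  unfold lap
  rw [sum_univ, sum_univ]
  simp only [if_pos (show (rookGraph F1).Adj w0 w1 by decide), if_neg (show ¬ (rookGraph F1).Adj w1 w1 by decide), if_pos (show (rookGraph F1).Adj w2 w1 by decide), if_pos (show (rookGraph F1).Adj w3 w1 by decide), if_neg (show ¬ (rookGraph F1).Adj w4 w1 by decide), if_pos (show (rookGraph F1).Adj w5 w1 by decide), if_neg (show ¬ (rookGraph F1).Adj w6 w1 by decide)]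
  ring

lemma lap2 (f : Vt → ℤ) : lap (rookGraph F1) f w2 = f w0 + f w1 + (-3) * f w2 + f w3 := by
  unfold lap
  rw [sum_univ, sum_univ]
  simp only [if_pos (show (rookGraph F1).Adj w0 w2 by decide), if_pos (show (rookGraph F1).Adj w1 w2 by decide), if_neg (show ¬ (rookGraph F1).Adj w2 w2 by decide), if_pos (show (rookGraph F1).Adj w3 w2 by decide), if_neg (show ¬ (rookGraph F1).Adj w4 w2 by decide), if_neg (show ¬ (rookGraph F1).Adj w5 w2 by decide), if_neg (show ¬ (rookGraph F1).Adj w6 w2 by decide)]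
  ring

lemma lap3 (f : Vt → ℤ) : lap (rookGraph F1) f w3 = f w0 + f w1 + f w2 + (-3) * f w3 := by
  unfold lap
  rw [sum_univ, sum_univ]
  simp only [if_pos (show (rookGraph F1).Adj w0 w3 by decide), if_pos (show (rookGraph F1).Adj w1 w3 by decide), if_pos (show (rookGraph F1).Adj w2 w3 by decide), if_neg (show ¬ (rookGraph F1).Adj w3 w3 by decide), if_neg (show ¬ (rookGraph F1).Adj w4 w3 by decide), if_neg (show ¬ (rookGraph F1).Adj w5 w3 by decide), if_neg (show ¬ (rookGraph F1).Adj w6 w3 by decide)]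
  ring

lemma lap4 (f : Vt → ℤ) : lap (rookGraph F1) f w4 = f w0 + (-3) * f w4 + f w5 + f w6 := by
  unfold lap
  rw [sum_univ, sum_univ]
  simp only [if_pos (show (rookGraph F1).Adj w0 w4 by decide), if_neg (show ¬ (rookGraph F1).Adj w1 w4 by decide), if_neg (show ¬ (rookGraph F1).Adj w2 w4 by decide), if_neg (show ¬ (rookGraph F1).Adj w3 w4 by decide), if_neg (show ¬ (rookGraph F1).Adj w4 w4 by decide), if_pos (show (rookGraph F1).Adj w5 w4 by decide), if_pos (show (rookGraph F1).Adj w6 w4 by decide)]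
  ring

lemma lap5 (f : Vt → ℤ) : lap (rookGraph F1) f w5 = f w1 + f w4 + (-2) * f w5 := by
  unfold lap
  rw [sum_univ, sum_univ]
  simp only [if_neg (show ¬ (rookGraph F1).Adj w0 w5 by decide), if_pos (show (rookGraph F1).Adj w1 w5 by decide), if_neg (show ¬ (rookGraph F1).Adj w2 w5 by decide), if_neg (show ¬ (rookGraph F1).Adj w3 w5 by decide), if_pos (show (rookGraph F1).Adj w4 w5 by decide), if_neg (show ¬ (rookGraph F1).Adj w5 w5 by decide), if_neg (show ¬ (rookGraph F1).Adj w6 w5 by decide)]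
  ring

lemma lap6 (f : Vt → ℤ) : lap (rookGraph F1) f w6 = f w0 + f w4 + (-2) * f w6 := by
  unfold lap
  rw [sum_univ, sum_univ]
  simp only [if_pos (show (rookGraph F1).Adj w0 w6 by decide), if_neg (show ¬ (rookGraph F1).Adj w1 w6 by decide), if_neg (show ¬ (rookGraph F1).Adj w2 w6 by decide), if_neg (show ¬ (rookGraph F1).Adj w3 w6 by decide), if_pos (show (rookGraph F1).Adj w4 w6 by decide), if_neg (show ¬ (rookGraph F1).Adj w5 w6 by decide), if_neg (show ¬ (rookGraph F1).Adj w6 w6 by decide)]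
  ring

def phiD (D : Vt → ℤ) : ℤ :=
  32 * D w1 + 73 * D w2 + 35 * D w3 + 8 * D w4 + 20 * D w5 + 4 * D w6

lemma phi_lin {D D' : Vt → ℤ} (h : LinEquiv (rookGraph F1) D D') :
    ∃ k : ℤ, phiD D' = phiD D + 152 * k := by
  obtain ⟨f, hf⟩ := h
  refine ⟨f w0 - f w2, ?_⟩
  unfold phiD
  rw [hf w1, hf w2, hf w3, hf w4, hf w5, hf w6,
      lap1, lap2, lap3, lap4, lap5, lap6]
  ring

lemma deg_lin {D D' : Vt → ℤ} (h : LinEquiv (rookGraph F1) D D') :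
    degD D' = degD D := by
  obtain ⟨f, hf⟩ := h
  unfold degD
  rw [sum_univ D', sum_univ D, hf w0, hf w1, hf w2, hf w3, hf w4, hf w5, hf w6,
      lap0, lap1, lap2, lap3, lap4, lap5, lap6]
  ring


def Dup : Vt → ℤ := fun v =>
  if (v : ℕ × ℕ) = (3,1) ∨ (v : ℕ × ℕ) = (1,2) ∨ (v : ℕ × ℕ) = (2,2) then 0 else 1

lemma Dxy_eval : ∀ v : Vt, Dxy F1 3 2 v = Dup v := by
  apply forall_V <;>
    (unfold Dxy Dup;
     split <;> first | decide | (rename_i h; exact absurd h (by decide)))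

def D2' : Vt → ℤ := fun v => if (v : ℕ × ℕ) = (3,1) then 3 else if (v : ℕ × ℕ) = (1,3) then 1 else 0
def f2' : Vt → ℤ := fun v => if (v : ℕ × ℕ) = (3,1) then 0 else 1
def D4' : Vt → ℤ := fun v =>
  if (v : ℕ × ℕ) = (4,1) then 1 else if (v : ℕ × ℕ) = (1,2) then 2 else
  if (v : ℕ × ℕ) = (2,2) then 1 else 0
def f4' : Vt → ℤ := fun v => if (v : ℕ × ℕ) = (1,2) ∨ (v : ℕ × ℕ) = (2,2) then 0 else 1

lemma lin2 : LinEquiv (rookGraph F1) (Dxy F1 3 2) D2' := by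
  refine ⟨f2', ?_⟩
  apply forall_V <;>
    (simp only [Dxy_eval];
     (first | rw [lap0] | rw [lap1] | rw [lap2] | rw [lap3] | rw [lap4] | rw [lap5] | rw [lap6]);
     decide)

lemma lin4 : LinEquiv (rookGraph F1) (Dxy F1 3 2) D4' := by
  refine ⟨f4', ?_⟩
  apply forall_V <;>
    (simp only [Dxy_eval];
     (first | rw [lap0] | rw [lap1] | rw [lap2] | rw [lap3] | rw [lap4] | rw [lap5] | rw [lap6]);
     decide)

lemma lin_self (D : Vt → ℤ) : LinEquiv (rookGraph F1) D D := by
  refine ⟨0, ?_⟩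
  apply forall_V <;>
    ((first | rw [lap0] | rw [lap1] | rw [lap2] | rw [lap3] | rw [lap4] | rw [lap5] | rw [lap6]);
     simp [Pi.zero_apply])

lemma DxyEff : Effective (Dxy F1 3 2) := by
  have : ∀ v : Vt, 0 ≤ Dxy F1 3 2 v := by
    apply forall_V <;> (rw [Dxy_eval]; decide)
  exact this

lemma upper : (4 : ℤ) ∈ gonSet F1 := by
  refine ⟨Dxy F1 3 2, ?_, ?_⟩
  · apply forall_V
    · exact ⟨_, lin_self _, DxyEff, by rw [Dxy_eval]; decide⟩
    · exact ⟨_, lin_self _, DxyEff, by rw [Dxy_eval]; decide⟩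
    · exact ⟨D2', lin2, (by decide : ∀ v, 0 ≤ D2' v), (by decide : (0:ℤ) < D2' w2)⟩
    · exact ⟨_, lin_self _, DxyEff, by rw [Dxy_eval]; decide⟩
    · exact ⟨D4', lin4, (by decide : ∀ v, 0 ≤ D4' v), (by decide : (0:ℤ) < D4' w4)⟩
    · exact ⟨D4', lin4, (by decide : ∀ v, 0 ≤ D4' v), (by decide : (0:ℤ) < D4' w5)⟩
    · exact ⟨_, lin_self _, DxyEff, by rw [Dxy_eval]; decide⟩
  · unfold degD
    rw [sum_univ]
    simp only [Dxy_eval]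
    decide

def T0 : Finset (ℕ × ℕ) := {(1,0), (2,0), (2,4), (2,8), (2,20), (2,32), (2,35), (2,73), (3,0), (3,4), (3,8), (3,12), (3,16), (3,20), (3,24), (3,28), (3,32), (3,35), (3,36), (3,39), (3,40), (3,43), (3,52), (3,55), (3,64), (3,67), (3,70), (3,73), (3,77), (3,81), (3,93), (3,105), (3,108), (3,146)}

lemma enum0 : ∀ n0 n1 n2 n3 n4 n5 n6 : Fin 4,
    1 ≤ (n0).val → n0.val + n1.val + n2.val + n3.val + n4.val + n5.val + n6.val ≤ 3 →
    (n0.val + n1.val + n2.val + n3.val + n4.val + n5.val + n6.val,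
      (32*n1.val + 73*n2.val + 35*n3.val + 8*n4.val + 20*n5.val + 4*n6.val) % 152) ∈ T0 := by
  decide

lemma enum0' (n0 n1 n2 n3 n4 n5 n6 : ℕ) (hc : 1 ≤ n0)
    (hs : n0 + n1 + n2 + n3 + n4 + n5 + n6 ≤ 3) :
    (n0 + n1 + n2 + n3 + n4 + n5 + n6,
      (32*n1 + 73*n2 + 35*n3 + 8*n4 + 20*n5 + 4*n6) % 152) ∈ T0 :=
  enum0 ⟨n0, by omega⟩ ⟨n1, by omega⟩ ⟨n2, by omega⟩ ⟨n3, by omega⟩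
    ⟨n4, by omega⟩ ⟨n5, by omega⟩ ⟨n6, by omega⟩ hc hs
def T1 : Finset (ℕ × ℕ) := {(1,32), (2,32), (2,36), (2,40), (2,52), (2,64), (2,67), (2,105), (3,26), (3,32), (3,36), (3,40), (3,44), (3,48), (3,52), (3,56), (3,60), (3,64), (3,67), (3,68), (3,71), (3,72), (3,75), (3,84), (3,87), (3,96), (3,99), (3,102), (3,105), (3,109), (3,113), (3,125), (3,137), (3,140)}

lemma enum1 : ∀ n0 n1 n2 n3 n4 n5 n6 : Fin 4,
    1 ≤ (n1).val → n0.val + n1.val + n2.val + n3.val + n4.val + n5.val + n6.val ≤ 3 →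
    (n0.val + n1.val + n2.val + n3.val + n4.val + n5.val + n6.val,
      (32*n1.val + 73*n2.val + 35*n3.val + 8*n4.val + 20*n5.val + 4*n6.val) % 152) ∈ T1 := by
  decide

lemma enum1' (n0 n1 n2 n3 n4 n5 n6 : ℕ) (hc : 1 ≤ n1)
    (hs : n0 + n1 + n2 + n3 + n4 + n5 + n6 ≤ 3) :
    (n0 + n1 + n2 + n3 + n4 + n5 + n6,
      (32*n1 + 73*n2 + 35*n3 + 8*n4 + 20*n5 + 4*n6) % 152) ∈ T1 :=
  enum1 ⟨n0, by omega⟩ ⟨n1, by omega⟩ ⟨n2, by omega⟩ ⟨n3, by omega⟩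
    ⟨n4, by omega⟩ ⟨n5, by omega⟩ ⟨n6, by omega⟩ hc hs
def T2 : Finset (ℕ × ℕ) := {(1,73), (2,73), (2,77), (2,81), (2,93), (2,105), (2,108), (2,146), (3,2), (3,14), (3,26), (3,29), (3,67), (3,73), (3,77), (3,81), (3,85), (3,89), (3,93), (3,97), (3,101), (3,105), (3,108), (3,109), (3,112), (3,113), (3,116), (3,125), (3,128), (3,137), (3,140), (3,143), (3,146), (3,150)}

lemma enum2 : ∀ n0 n1 n2 n3 n4 n5 n6 : Fin 4,
    1 ≤ (n2).val → n0.val + n1.val + n2.val + n3.val + n4.val + n5.val + n6.val ≤ 3 →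
    (n0.val + n1.val + n2.val + n3.val + n4.val + n5.val + n6.val,
      (32*n1.val + 73*n2.val + 35*n3.val + 8*n4.val + 20*n5.val + 4*n6.val) % 152) ∈ T2 := by
  decide

lemma enum2' (n0 n1 n2 n3 n4 n5 n6 : ℕ) (hc : 1 ≤ n2)
    (hs : n0 + n1 + n2 + n3 + n4 + n5 + n6 ≤ 3) :
    (n0 + n1 + n2 + n3 + n4 + n5 + n6,
      (32*n1 + 73*n2 + 35*n3 + 8*n4 + 20*n5 + 4*n6) % 152) ∈ T2 :=
  enum2 ⟨n0, by omega⟩ ⟨n1, by omega⟩ ⟨n2, by omega⟩ ⟨n3, by omega⟩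
    ⟨n4, by omega⟩ ⟨n5, by omega⟩ ⟨n6, by omega⟩ hc hs
def T4 : Finset (ℕ × ℕ) := {(1,8), (2,8), (2,12), (2,16), (2,28), (2,40), (2,43), (2,81), (3,2), (3,8), (3,12), (3,16), (3,20), (3,24), (3,28), (3,32), (3,36), (3,40), (3,43), (3,44), (3,47), (3,48), (3,51), (3,60), (3,63), (3,72), (3,75), (3,78), (3,81), (3,85), (3,89), (3,101), (3,113), (3,116)}

lemma enum4 : ∀ n0 n1 n2 n3 n4 n5 n6 : Fin 4,
    1 ≤ (n4).val → n0.val + n1.val + n2.val + n3.val + n4.val + n5.val + n6.val ≤ 3 →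
    (n0.val + n1.val + n2.val + n3.val + n4.val + n5.val + n6.val,
      (32*n1.val + 73*n2.val + 35*n3.val + 8*n4.val + 20*n5.val + 4*n6.val) % 152) ∈ T4 := by
  decide

lemma enum4' (n0 n1 n2 n3 n4 n5 n6 : ℕ) (hc : 1 ≤ n4)
    (hs : n0 + n1 + n2 + n3 + n4 + n5 + n6 ≤ 3) :
    (n0 + n1 + n2 + n3 + n4 + n5 + n6,
      (32*n1 + 73*n2 + 35*n3 + 8*n4 + 20*n5 + 4*n6) % 152) ∈ T4 :=
  enum4 ⟨n0, by omega⟩ ⟨n1, by omega⟩ ⟨n2, by omega⟩ ⟨n3, by omega⟩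
    ⟨n4, by omega⟩ ⟨n5, by omega⟩ ⟨n6, by omega⟩ hc hs


lemma chip_nat (m : ℕ) (x : ℤ) (h : (m:ℤ) = x) (hx : 0 < x) : 1 ≤ m := by omega
lemma sum_le3 (s : ℕ) (d : ℤ) (h : (s:ℤ) = d) (h4 : d < 4) : s ≤ 3 := by omega
lemma sum_eq_nat (s t : ℕ) (d : ℤ) (h1 : (s:ℤ) = d) (h2 : (t:ℤ) = d) : s = t := by omega

lemma mod_eq_of (x y pD k0 k1 : ℤ) (nx ny : ℕ) (hnx : (nx:ℤ) = x) (hny : (ny:ℤ) = y)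
    (hx : x = pD + 152*k0) (hy : y = pD + 152*k1) : nx % 152 = ny % 152 := by omega

lemma Tinter : T0 ∩ T1 ∩ T2 ∩ T4 = ∅ := by decide

set_option maxHeartbeats 2000000 in
theorem stmt15 : IsLeast (gonSet F1) 4 := by
  constructor
  · exact upper
  · rintro d ⟨D, hpos, hdeg⟩
    by_contra hlt
    push_neg at hlt
    obtain ⟨E0, hE0lin, hE0eff, hE0pos⟩ := hpos w0
    obtain ⟨ka, hka⟩ := phi_lin hE0lin
    unfold phiD at hka
    have hda : degD E0 = d := by rw [deg_lin hE0lin, hdeg]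
    unfold degD at hda
    rw [sum_univ] at hda
    obtain ⟨a0, ha0⟩ : ∃ m : ℕ, (m:ℤ) = E0 w0 := ⟨(E0 w0).toNat, Int.toNat_of_nonneg (hE0eff w0)⟩
    obtain ⟨a1, ha1⟩ : ∃ m : ℕ, (m:ℤ) = E0 w1 := ⟨(E0 w1).toNat, Int.toNat_of_nonneg (hE0eff w1)⟩
    obtain ⟨a2, ha2⟩ : ∃ m : ℕ, (m:ℤ) = E0 w2 := ⟨(E0 w2).toNat, Int.toNat_of_nonneg (hE0eff w2)⟩
    obtain ⟨a3, ha3⟩ : ∃ m : ℕ, (m:ℤ) = E0 w3 := ⟨(E0 w3).toNat, Int.toNat_of_nonneg (hE0eff w3)⟩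
    obtain ⟨a4, ha4⟩ : ∃ m : ℕ, (m:ℤ) = E0 w4 := ⟨(E0 w4).toNat, Int.toNat_of_nonneg (hE0eff w4)⟩
    obtain ⟨a5, ha5⟩ : ∃ m : ℕ, (m:ℤ) = E0 w5 := ⟨(E0 w5).toNat, Int.toNat_of_nonneg (hE0eff w5)⟩
    obtain ⟨a6, ha6⟩ : ∃ m : ℕ, (m:ℤ) = E0 w6 := ⟨(E0 w6).toNat, Int.toNat_of_nonneg (hE0eff w6)⟩
    have hNa : (((32*a1 + 73*a2 + 35*a3 + 8*a4 + 20*a5 + 4*a6 : ℕ)):ℤ) = 32*E0 w1 + 73*E0 w2 + 35*E0 w3 + 8*E0 w4 + 20*E0 w5 + 4*E0 w6 := by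
      push_cast
      rw [ha1, ha2, ha3, ha4, ha5, ha6]
    have hSa : (((a0 + a1 + a2 + a3 + a4 + a5 + a6 : ℕ)):ℤ) = d := by
      push_cast
      rw [ha0, ha1, ha2, ha3, ha4, ha5, ha6]
      exact hda
    have hchipa : 1 ≤ a0 := chip_nat _ _ ha0 hE0pos
    have hsuma : a0 + a1 + a2 + a3 + a4 + a5 + a6 ≤ 3 := sum_le3 _ _ hSa hlt
    obtain ⟨E1, hE1lin, hE1eff, hE1pos⟩ := hpos w1
    obtain ⟨kb, hkb⟩ := phi_lin hE1lin
    unfold phiD at hkb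
    have hdb : degD E1 = d := by rw [deg_lin hE1lin, hdeg]
    unfold degD at hdb
    rw [sum_univ] at hdb
    obtain ⟨b0, hb0⟩ : ∃ m : ℕ, (m:ℤ) = E1 w0 := ⟨(E1 w0).toNat, Int.toNat_of_nonneg (hE1eff w0)⟩
    obtain ⟨b1, hb1⟩ : ∃ m : ℕ, (m:ℤ) = E1 w1 := ⟨(E1 w1).toNat, Int.toNat_of_nonneg (hE1eff w1)⟩
    obtain ⟨b2, hb2⟩ : ∃ m : ℕ, (m:ℤ) = E1 w2 := ⟨(E1 w2).toNat, Int.toNat_of_nonneg (hE1eff w2)⟩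
    obtain ⟨b3, hb3⟩ : ∃ m : ℕ, (m:ℤ) = E1 w3 := ⟨(E1 w3).toNat, Int.toNat_of_nonneg (hE1eff w3)⟩
    obtain ⟨b4, hb4⟩ : ∃ m : ℕ, (m:ℤ) = E1 w4 := ⟨(E1 w4).toNat, Int.toNat_of_nonneg (hE1eff w4)⟩
    obtain ⟨b5, hb5⟩ : ∃ m : ℕ, (m:ℤ) = E1 w5 := ⟨(E1 w5).toNat, Int.toNat_of_nonneg (hE1eff w5)⟩
    obtain ⟨b6, hb6⟩ : ∃ m : ℕ, (m:ℤ) = E1 w6 := ⟨(E1 w6).toNat, Int.toNat_of_nonneg (hE1eff w6)⟩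
    have hNb : (((32*b1 + 73*b2 + 35*b3 + 8*b4 + 20*b5 + 4*b6 : ℕ)):ℤ) = 32*E1 w1 + 73*E1 w2 + 35*E1 w3 + 8*E1 w4 + 20*E1 w5 + 4*E1 w6 := by
      push_cast
      rw [hb1, hb2, hb3, hb4, hb5, hb6]
    have hSb : (((b0 + b1 + b2 + b3 + b4 + b5 + b6 : ℕ)):ℤ) = d := by
      push_cast
      rw [hb0, hb1, hb2, hb3, hb4, hb5, hb6]
      exact hdb
    have hchipb : 1 ≤ b1 := chip_nat _ _ hb1 hE1pos
    have hsumb : b0 + b1 + b2 + b3 + b4 + b5 + b6 ≤ 3 := sum_le3 _ _ hSb hlt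
    obtain ⟨E2, hE2lin, hE2eff, hE2pos⟩ := hpos w2
    obtain ⟨kc, hkc⟩ := phi_lin hE2lin
    unfold phiD at hkc
    have hdc : degD E2 = d := by rw [deg_lin hE2lin, hdeg]
    unfold degD at hdc
    rw [sum_univ] at hdc
    obtain ⟨c0, hc0⟩ : ∃ m : ℕ, (m:ℤ) = E2 w0 := ⟨(E2 w0).toNat, Int.toNat_of_nonneg (hE2eff w0)⟩
    obtain ⟨c1, hc1⟩ : ∃ m : ℕ, (m:ℤ) = E2 w1 := ⟨(E2 w1).toNat, Int.toNat_of_nonneg (hE2eff w1)⟩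
    obtain ⟨c2, hc2⟩ : ∃ m : ℕ, (m:ℤ) = E2 w2 := ⟨(E2 w2).toNat, Int.toNat_of_nonneg (hE2eff w2)⟩
    obtain ⟨c3, hc3⟩ : ∃ m : ℕ, (m:ℤ) = E2 w3 := ⟨(E2 w3).toNat, Int.toNat_of_nonneg (hE2eff w3)⟩
    obtain ⟨c4, hc4⟩ : ∃ m : ℕ, (m:ℤ) = E2 w4 := ⟨(E2 w4).toNat, Int.toNat_of_nonneg (hE2eff w4)⟩
    obtain ⟨c5, hc5⟩ : ∃ m : ℕ, (m:ℤ) = E2 w5 := ⟨(E2 w5).toNat, Int.toNat_of_nonneg (hE2eff w5)⟩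
    obtain ⟨c6, hc6⟩ : ∃ m : ℕ, (m:ℤ) = E2 w6 := ⟨(E2 w6).toNat, Int.toNat_of_nonneg (hE2eff w6)⟩
    have hNc : (((32*c1 + 73*c2 + 35*c3 + 8*c4 + 20*c5 + 4*c6 : ℕ)):ℤ) = 32*E2 w1 + 73*E2 w2 + 35*E2 w3 + 8*E2 w4 + 20*E2 w5 + 4*E2 w6 := by
      push_cast
      rw [hc1, hc2, hc3, hc4, hc5, hc6]
    have hSc : (((c0 + c1 + c2 + c3 + c4 + c5 + c6 : ℕ)):ℤ) = d := by
      push_cast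
      rw [hc0, hc1, hc2, hc3, hc4, hc5, hc6]
      exact hdc
    have hchipc : 1 ≤ c2 := chip_nat _ _ hc2 hE2pos
    have hsumc : c0 + c1 + c2 + c3 + c4 + c5 + c6 ≤ 3 := sum_le3 _ _ hSc hlt
    obtain ⟨E4, hE4lin, hE4eff, hE4pos⟩ := hpos w4
    obtain ⟨ke, hke⟩ := phi_lin hE4lin
    unfold phiD at hke
    have hde : degD E4 = d := by rw [deg_lin hE4lin, hdeg]
    unfold degD at hde
    rw [sum_univ] at hde
    obtain ⟨e0, he0⟩ : ∃ m : ℕ, (m:ℤ) = E4 w0 := ⟨(E4 w0).toNat, Int.toNat_of_nonneg (hE4eff w0)⟩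
    obtain ⟨e1, he1⟩ : ∃ m : ℕ, (m:ℤ) = E4 w1 := ⟨(E4 w1).toNat, Int.toNat_of_nonneg (hE4eff w1)⟩
    obtain ⟨e2, he2⟩ : ∃ m : ℕ, (m:ℤ) = E4 w2 := ⟨(E4 w2).toNat, Int.toNat_of_nonneg (hE4eff w2)⟩
    obtain ⟨e3, he3⟩ : ∃ m : ℕ, (m:ℤ) = E4 w3 := ⟨(E4 w3).toNat, Int.toNat_of_nonneg (hE4eff w3)⟩
    obtain ⟨e4, he4⟩ : ∃ m : ℕ, (m:ℤ) = E4 w4 := ⟨(E4 w4).toNat, Int.toNat_of_nonneg (hE4eff w4)⟩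
    obtain ⟨e5, he5⟩ : ∃ m : ℕ, (m:ℤ) = E4 w5 := ⟨(E4 w5).toNat, Int.toNat_of_nonneg (hE4eff w5)⟩
    obtain ⟨e6, he6⟩ : ∃ m : ℕ, (m:ℤ) = E4 w6 := ⟨(E4 w6).toNat, Int.toNat_of_nonneg (hE4eff w6)⟩
    have hNe : (((32*e1 + 73*e2 + 35*e3 + 8*e4 + 20*e5 + 4*e6 : ℕ)):ℤ) = 32*E4 w1 + 73*E4 w2 + 35*E4 w3 + 8*E4 w4 + 20*E4 w5 + 4*E4 w6 := by
      push_cast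
      rw [he1, he2, he3, he4, he5, he6]
    have hSe : (((e0 + e1 + e2 + e3 + e4 + e5 + e6 : ℕ)):ℤ) = d := by
      push_cast
      rw [he0, he1, he2, he3, he4, he5, he6]
      exact hde
    have hchipe : 1 ≤ e4 := chip_nat _ _ he4 hE4pos
    have hsume : e0 + e1 + e2 + e3 + e4 + e5 + e6 ≤ 3 := sum_le3 _ _ hSe hlt

    have req_b : (32*a1 + 73*a2 + 35*a3 + 8*a4 + 20*a5 + 4*a6) % 152 = (32*b1 + 73*b2 + 35*b3 + 8*b4 + 20*b5 + 4*b6) % 152 :=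
      mod_eq_of _ _ _ ka kb _ _ hNa hNb hka hkb
    have req_c : (32*a1 + 73*a2 + 35*a3 + 8*a4 + 20*a5 + 4*a6) % 152 = (32*c1 + 73*c2 + 35*c3 + 8*c4 + 20*c5 + 4*c6) % 152 :=
      mod_eq_of _ _ _ ka kc _ _ hNa hNc hka hkc
    have req_e : (32*a1 + 73*a2 + 35*a3 + 8*a4 + 20*a5 + 4*a6) % 152 = (32*e1 + 73*e2 + 35*e3 + 8*e4 + 20*e5 + 4*e6) % 152 :=
      mod_eq_of _ _ _ ka ke _ _ hNa hNe hka hke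
    have rs_b : a0 + a1 + a2 + a3 + a4 + a5 + a6 = b0 + b1 + b2 + b3 + b4 + b5 + b6 := sum_eq_nat _ _ _ hSa hSb
    have rs_c : a0 + a1 + a2 + a3 + a4 + a5 + a6 = c0 + c1 + c2 + c3 + c4 + c5 + c6 := sum_eq_nat _ _ _ hSa hSc
    have rs_e : a0 + a1 + a2 + a3 + a4 + a5 + a6 = e0 + e1 + e2 + e3 + e4 + e5 + e6 := sum_eq_nat _ _ _ hSa hSe
    have ma := enum0' a0 a1 a2 a3 a4 a5 a6 hchipa hsuma
    have mb := enum1' b0 b1 b2 b3 b4 b5 b6 hchipb hsumb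
    have mc := enum2' c0 c1 c2 c3 c4 c5 c6 hchipc hsumc
    have me := enum4' e0 e1 e2 e3 e4 e5 e6 hchipe hsume
    rw [← rs_b, ← req_b] at mb
    rw [← rs_c, ← req_c] at mc
    rw [← rs_e, ← req_e] at me
    have : (a0 + a1 + a2 + a3 + a4 + a5 + a6,
        (32*a1 + 73*a2 + 35*a3 + 8*a4 + 20*a5 + 4*a6) % 152) ∈ T0 ∩ T1 ∩ T2 ∩ T4 := by
      rw [Finset.mem_inter, Finset.mem_inter, Finset.mem_inter]
      exact ⟨⟨⟨ma, mb⟩, mc⟩, me⟩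
    rw [Tinter] at this
    exact absurd this (Finset.notMem_empty _)
end
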